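/- Every orientation preserving homeomorphism f of the real line can be written as f = g ∘ h, where g and h are orientation preserving homeomorphisms of ℝ, each of which is reversible in H⁺(ℝ); that is, there exist strictly increasing homeomorphisms k₁ and k₂ of ℝ with k₁ ∘ g ∘ k₁⁻¹ = g⁻¹ and k₂ ∘ h ∘ k₂⁻¹ = h⁻¹. (In other words, H⁺(ℝ) = R₂(H⁺(ℝ)).) -/

import Mathlib

open Set Filter Function
noncomputable section
open Set Filter Function

noncomputable section

def SMS (φ : ℝ → ℝ) : Prop := StrictMono φ ∧ Function.Surjective φ

namespace SMS

theorem idSMS : SMS (fun x : ℝ => x) := ⟨strictMono_id, surjective_id⟩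

theorem comp {φ ψ : ℝ → ℝ} (h1 : SMS φ) (h2 : SMS ψ) : SMS (φ ∘ ψ) :=
  ⟨h1.1.comp h2.1, h1.2.comp h2.2⟩

theorem continuous {φ} (h : SMS φ) : Continuous φ :=
  (StrictMono.orderIsoOfSurjective φ h.1 h.2).toHomeomorph.continuous

def perm {φ} (h : SMS φ) : Equiv.Perm ℝ := Equiv.ofBijective φ ⟨h.1.injective, h.2⟩

@[simp] theorem perm_apply {φ} (h : SMS φ) (x : ℝ) : h.perm x = φ x := rfl

theorem perm_symm_apply_comp {φ} (h : SMS φ) (x : ℝ) : φ (h.perm.symm x) = x :=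
  h.perm.apply_symm_apply x

theorem perm_symm_comp_apply {φ} (h : SMS φ) (x : ℝ) : h.perm.symm (φ x) = x :=
  h.perm.symm_apply_apply x

theorem symm_strictMono {φ} (h : SMS φ) : StrictMono ⇑h.perm.symm := by
  intro a b hab
  have ha : φ (h.perm.symm a) = a := h.perm.apply_symm_apply a
  have hb : φ (h.perm.symm b) = b := h.perm.apply_symm_apply b
  apply h.1.lt_iff_lt.mp
  rw [ha, hb]
  exact hab

theorem symm {φ} (h : SMS φ) : SMS ⇑h.perm.symm :=
  ⟨h.symm_strictMono, h.perm.symm.surjective⟩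

theorem lt_iff {φ} (h : SMS φ) {a b : ℝ} : φ a < φ b ↔ a < b := h.1.lt_iff_lt

end SMS

/-- generalized floor for a strictly monotone `ℤ`-indexed family -/
theorem zfloor_exists (c : ℤ → ℝ) (hc : StrictMono c) {t : ℝ}
    (h1 : ∃ j, c j ≤ t) (h2 : ∃ j, t < c j) : ∃ n, c n ≤ t ∧ t < c (n + 1) := by
  obtain ⟨B, hB⟩ := h2
  have hbd : ∃ b : ℤ, ∀ z : ℤ, c z ≤ t → z ≤ b := by
    refine ⟨B, fun z hz => ?_⟩
    by_contra hzB
    push_neg at hzB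
    exact absurd (le_trans (hc hzB).le hz) (not_le.mpr hB)
  obtain ⟨n, hn, hmax⟩ := Int.exists_greatest_of_bdd hbd h1
  refine ⟨n, hn, ?_⟩
  by_contra hcon
  push_neg at hcon
  exact absurd (hmax (n + 1) hcon) (by omega)

theorem zfloor_unique (c : ℤ → ℝ) (hc : StrictMono c) {t : ℝ} {i j : ℤ}
    (hi : c i ≤ t ∧ t < c (i + 1)) (hj : c j ≤ t ∧ t < c (j + 1)) : i = j := by
  by_contra hne
  rcases lt_or_gt_of_ne hne with hlt | hlt
  · have : (i + 1 : ℤ) ≤ j := by omega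
    exact absurd (le_trans (hc.monotone this) hj.1) (not_le.mpr hi.2)
  · have : (j + 1 : ℤ) ≤ i := by omega
    exact absurd (le_trans (hc.monotone this) hi.1) (not_le.mpr hj.2)

/-- master gluing lemma -/
theorem glue_master (c d : ℤ → ℝ) (hc : StrictMono c) (hd : StrictMono d)
    (F : ℤ → ℝ → ℝ)
    (hmono : ∀ j, StrictMonoOn (F j) (Ico (c j) (c (j + 1))))
    (hmaps : ∀ j, MapsTo (F j) (Ico (c j) (c (j + 1))) (Ico (d j) (d (j + 1))))
    (hsurj : ∀ j, SurjOn (F j) (Ico (c j) (c (j + 1))) (Ico (d j) (d (j + 1)))) :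
    ∃ Φ : ℝ → ℝ,
      (∀ j, ∀ t ∈ Ico (c j) (c (j + 1)), Φ t = F j t) ∧
      StrictMonoOn Φ (⋃ j, Ico (c j) (c (j + 1))) ∧
      MapsTo Φ (⋃ j, Ico (c j) (c (j + 1))) (⋃ j, Ico (d j) (d (j + 1))) ∧
      SurjOn Φ (⋃ j, Ico (c j) (c (j + 1))) (⋃ j, Ico (d j) (d (j + 1))) := by
  classical
  refine ⟨fun t => if h : ∃ j, c j ≤ t ∧ t < c (j + 1) then F h.choose t else t, ?_, ?_, ?_, ?_⟩
  · intro j t ht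
    have hex : ∃ i, c i ≤ t ∧ t < c (i + 1) := ⟨j, ht.1, ht.2⟩
    simp only [dif_pos hex]
    congr 1
    exact zfloor_unique c hc hex.choose_spec ⟨ht.1, ht.2⟩
  all_goals {
    have heval : ∀ j, ∀ t ∈ Ico (c j) (c (j + 1)),
        (fun t => if h : ∃ j, c j ≤ t ∧ t < c (j + 1) then F h.choose t else t) t = F j t := by
      intro j t ht
      have hex : ∃ i, c i ≤ t ∧ t < c (i + 1) := ⟨j, ht.1, ht.2⟩
      simp only [dif_pos hex]
      congr 1
      exact zfloor_unique c hc hex.choose_spec ⟨ht.1, ht.2⟩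
    first
    | -- StrictMonoOn
      ( intro s hs t ht hst
        obtain ⟨Si, hSi⟩ := mem_iUnion.mp hs
        obtain ⟨Ti, hTi⟩ := mem_iUnion.mp ht
        rw [heval _ _ hSi, heval _ _ hTi]
        rcases lt_trichotomy Si Ti with hij | hij | hij
        · calc F Si s < d (Si + 1) := (hmaps Si hSi).2
            _ ≤ d Ti := hd.monotone (by omega)
            _ ≤ F Ti t := (hmaps Ti hTi).1
        · subst hij; exact hmono Si hSi hTi hst
        · exfalso
          have : c Ti < c (Ti + 1) := hc (by omega)
          have h1 : t < c (Ti + 1) := hTi.2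
          have h2 : c (Ti + 1) ≤ c Si := hc.monotone (by omega)
          exact absurd (lt_of_lt_of_le h1 (le_trans h2 hSi.1)) (not_lt.mpr hst.le) )
    | -- MapsTo
      ( intro t ht
        obtain ⟨j, hj⟩ := mem_iUnion.mp ht
        rw [heval _ _ hj]
        exact mem_iUnion.mpr ⟨j, hmaps j hj⟩ )
    | -- SurjOn
      ( intro y hy
        obtain ⟨j, hj⟩ := mem_iUnion.mp hy
        obtain ⟨s, hs, hfs⟩ := hsurj j hj
        exact ⟨s, mem_iUnion.mpr ⟨j, hs⟩, by rw [heval _ _ hs]; exact hfs⟩ )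
  }

theorem iUnion_Ico_eq_univ (c : ℤ → ℝ) (hc : StrictMono c)
    (htop : Tendsto c atTop atTop) (hbot : Tendsto c atBot atBot) :
    (⋃ j, Ico (c j) (c (j + 1))) = univ := by
  ext t
  simp only [mem_iUnion, mem_univ, iff_true]
  have h1 : ∃ j, c j ≤ t := (hbot.eventually_le_atBot t).exists
  have h2 : ∃ j, t < c j := (htop.eventually_ge_atTop (t + 1)).exists.imp
    (fun j hj => by linarith)
  obtain ⟨n, hn⟩ := zfloor_exists c hc h1 h2
  exact ⟨n, hn.1, hn.2⟩

theorem iUnion_Ico_eq_Ioo (c : ℤ → ℝ) (hc : StrictMono c) {a b : ℝ}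
    (htop : Tendsto c atTop (nhds b)) (hbot : Tendsto c atBot (nhds a)) :
    (⋃ j, Ico (c j) (c (j + 1))) = Ioo a b := by
  have hge : ∀ j, a ≤ c j := by
    intro j
    refine le_of_tendsto hbot ?_
    filter_upwards [eventually_le_atBot j] with i hi
    exact hc.monotone hi
  have hle : ∀ j, c j ≤ b := by
    intro j
    refine ge_of_tendsto htop ?_
    filter_upwards [eventually_ge_atTop j] with i hi
    exact hc.monotone hi
  ext t
  simp only [mem_iUnion, mem_Ico, mem_Ioo]
  constructor
  · rintro ⟨j, hj1, hj2⟩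
    have hstep : c (j - 1) < c j := hc (by omega)
    exact ⟨lt_of_lt_of_le (lt_of_le_of_lt (hge (j - 1)) hstep) hj1,
      lt_of_lt_of_le hj2 (hle (j + 1))⟩
  · rintro ⟨ht1, ht2⟩
    have h1 : ∃ j, c j ≤ t := by
      have hev : ∀ᶠ j in atBot, c j ∈ Iio t := hbot.eventually_mem (Iio_mem_nhds ht1)
      exact hev.exists.imp fun j hj => le_of_lt hj
    have h2 : ∃ j, t < c j := by
      have hev : ∀ᶠ j in atTop, c j ∈ Ioi t := htop.eventually_mem (Ioi_mem_nhds ht2)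
      exact hev.exists
    exact zfloor_exists c hc h1 h2

/-- gluing over the whole line -/
theorem glueR (c d : ℤ → ℝ) (hc : StrictMono c) (hd : StrictMono d)
    (hct : Tendsto c atTop atTop) (hcb : Tendsto c atBot atBot)
    (hdt : Tendsto d atTop atTop) (hdb : Tendsto d atBot atBot)
    (F : ℤ → ℝ → ℝ)
    (hmono : ∀ j, StrictMonoOn (F j) (Ico (c j) (c (j + 1))))
    (hmaps : ∀ j, MapsTo (F j) (Ico (c j) (c (j + 1))) (Ico (d j) (d (j + 1))))
    (hsurj : ∀ j, SurjOn (F j) (Ico (c j) (c (j + 1))) (Ico (d j) (d (j + 1)))) :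
    ∃ Φ : ℝ → ℝ, SMS Φ ∧ (∀ j, ∀ t ∈ Ico (c j) (c (j + 1)), Φ t = F j t) := by
  obtain ⟨Φ, heval, hmo, hma, hsu⟩ := glue_master c d hc hd F hmono hmaps hsurj
  rw [iUnion_Ico_eq_univ c hc hct hcb] at hmo hsu
  rw [iUnion_Ico_eq_univ d hd hdt hdb] at hsu
  refine ⟨Φ, ⟨fun x y hxy => hmo (mem_univ x) (mem_univ y) hxy, fun y => ?_⟩, heval⟩
  obtain ⟨x, _, hx⟩ := hsu (mem_univ y)
  exact ⟨x, hx⟩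

/-- gluing over an interval -/
theorem glueI (c d : ℤ → ℝ) (hc : StrictMono c) (hd : StrictMono d)
    {a b a' b' : ℝ}
    (hct : Tendsto c atTop (nhds b)) (hcb : Tendsto c atBot (nhds a))
    (hdt : Tendsto d atTop (nhds b')) (hdb : Tendsto d atBot (nhds a'))
    (F : ℤ → ℝ → ℝ)
    (hmono : ∀ j, StrictMonoOn (F j) (Ico (c j) (c (j + 1))))
    (hmaps : ∀ j, MapsTo (F j) (Ico (c j) (c (j + 1))) (Ico (d j) (d (j + 1))))
    (hsurj : ∀ j, SurjOn (F j) (Ico (c j) (c (j + 1))) (Ico (d j) (d (j + 1)))) :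
    ∃ Φ : ℝ → ℝ, StrictMonoOn Φ (Ioo a b) ∧ MapsTo Φ (Ioo a b) (Ioo a' b') ∧
      SurjOn Φ (Ioo a b) (Ioo a' b') ∧
      (∀ j, ∀ t ∈ Ico (c j) (c (j + 1)), Φ t = F j t) := by
  obtain ⟨Φ, heval, hmo, hma, hsu⟩ := glue_master c d hc hd F hmono hmaps hsurj
  rw [iUnion_Ico_eq_Ioo c hc hct hcb] at hmo hma hsu
  rw [iUnion_Ico_eq_Ioo d hd hdt hdb] at hma hsu
  exact ⟨Φ, hmo, hma, hsu, heval⟩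

theorem SMS.symmPerm {e : Equiv.Perm ℝ} (h : SMS ⇑e) : SMS ⇑e.symm := by
  constructor
  · intro p q hpq
    apply h.1.lt_iff_lt.mp
    rw [e.apply_symm_apply, e.apply_symm_apply]
    exact hpq
  · exact e.symm.surjective

theorem SMS.powPerm {e : Equiv.Perm ℝ} (h : SMS ⇑e) (n : ℕ) : SMS ⇑(e ^ n) := by
  induction n with
  | zero => simp only [pow_zero]; exact SMS.idSMS
  | succ n ih =>
      have : ⇑(e ^ (n + 1)) = ⇑(e ^ n) ∘ ⇑e := by
        rw [pow_succ]; rfl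
      rw [this]
      exact ih.comp h

theorem SMS.zpowPerm {e : Equiv.Perm ℝ} (h : SMS ⇑e) (j : ℤ) : SMS ⇑(e ^ j) := by
  obtain ⟨n, rfl | rfl⟩ := Int.eq_nat_or_neg j
  · rw [zpow_natCast]; exact h.powPerm n
  · have h1 : (e ^ (-(n:ℤ))) = (e ^ n)⁻¹ := by rw [zpow_neg, zpow_natCast]
    rw [h1]
    have h2 : ⇑(e ^ n)⁻¹ = ⇑(e ^ n).symm := rfl
    rw [h2]
    exact (h.powPerm n).symmPerm

theorem zpow_apply_add (e : Equiv.Perm ℝ) (p q : ℤ) (t : ℝ) :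
    (e ^ p) ((e ^ q) t) = (e ^ (p + q)) t := by
  rw [← Equiv.Perm.mul_apply, ← zpow_add]

theorem zpow_succ_apply (e : Equiv.Perm ℝ) (j : ℤ) (t : ℝ) :
    (e ^ (j + 1)) t = e ((e ^ j) t) := by
  have : e ((e ^ j) t) = (e ^ (1:ℤ)) ((e ^ j) t) := by rw [zpow_one]
  rw [this, zpow_apply_add, add_comm]

/-- the forward orbit of a fixed-point-free (above id) SMS map -/
theorem orbit_basic {u : ℝ → ℝ} (hu : SMS u) (hufp : ∀ x, x < u x) :
    StrictMono (fun j : ℤ => (hu.perm ^ j) 0) ∧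
    Tendsto (fun j : ℤ => (hu.perm ^ j) 0) atTop atTop ∧
    Tendsto (fun j : ℤ => (hu.perm ^ j) 0) atBot atBot := by
  set E := hu.perm with hE
  have hcoe : ⇑E = u := rfl
  set x : ℤ → ℝ := fun j => (E ^ j) 0 with hx
  have hsucc : ∀ j, x (j + 1) = u (x j) := by
    intro j; rw [hx]; simp only []
    rw [zpow_succ_apply, hcoe]
  have hmono : StrictMono x := by
    apply strictMono_int_of_lt_succ
    intro j; rw [hsucc]; exact hufp (x j)
  refine ⟨hmono, ?_, ?_⟩
  · -- atTop
    rw [tendsto_atTop_atTop]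
    intro B
    by_contra hcon
    push_neg at hcon
    have hbdd : ∀ j, x j < B := by
      intro j
      obtain ⟨i, hji, hi⟩ := hcon j
      exact lt_of_le_of_lt (hmono.monotone hji) hi
    have hne : (range x).Nonempty := ⟨x 0, mem_range_self 0⟩
    have hba : BddAbove (range x) := ⟨B, by rintro _ ⟨j, rfl⟩; exact (hbdd j).le⟩
    set L := sSup (range x) with hL
    have hLle : ∀ j, x j ≤ L := fun j => le_csSup hba (mem_range_self j)
    have hLu : L < u L := hufp L
    obtain ⟨w, hw⟩ := hu.2 ((L + u L) / 2)
    have hwlt : w < L := by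
      apply hu.1.lt_iff_lt.mp
      rw [hw]
      linarith
    obtain ⟨z, ⟨j, rfl⟩, hjz⟩ := exists_lt_of_lt_csSup hne hwlt
    have : u w < u (x j) := hu.1 hjz
    rw [hw, ← hsucc] at this
    linarith [hLle (j + 1)]
  · -- atBot
    rw [tendsto_atBot_atBot]
    intro B
    by_contra hcon
    push_neg at hcon
    have hbdd : ∀ j, B < x j := by
      intro j
      obtain ⟨i, hji, hi⟩ := hcon j
      exact lt_of_lt_of_le hi (hmono.monotone hji)
    have hne : (range x).Nonempty := ⟨x 0, mem_range_self 0⟩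
    have hbb : BddBelow (range x) := ⟨B, by rintro _ ⟨j, rfl⟩; exact (hbdd j).le⟩
    set L := sInf (range x) with hL
    have hLle : ∀ j, L ≤ x j := fun j => csInf_le hbb (mem_range_self j)
    have hLu : L < u L := hufp L
    have : L < u L := hLu
    obtain ⟨z, ⟨j, rfl⟩, hjz⟩ := exists_lt_of_csInf_lt hne this
    have hxj : x j = u (x (j - 1)) := by rw [← hsucc]; norm_num
    rw [hxj] at hjz
    have : x (j - 1) < L := hu.1.lt_iff_lt.mp hjz
    exact absurd this (not_lt.mpr (hLle (j - 1)))

/-- conjugacy of fixed-point-free (above identity) SMS maps of ℝ -/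
theorem fpf_conj_R {u v : ℝ → ℝ} (hu : SMS u) (hv : SMS v)
    (hufp : ∀ x, x < u x) (hvfp : ∀ x, x < v x) :
    ∃ k, SMS k ∧ ∀ x, k (u x) = v (k x) := by
  classical
  set Eu := hu.perm with hEu
  set Ev := hv.perm with hEv
  have hcu : ⇑Eu = u := rfl
  have hcv : ⇑Ev = v := rfl
  set c : ℤ → ℝ := fun j => (Eu ^ j) 0 with hcdef
  set d : ℤ → ℝ := fun j => (Ev ^ j) 0 with hddef
  obtain ⟨hcm, hct, hcb⟩ := orbit_basic hu hufp
  obtain ⟨hdm, hdt, hdb⟩ := orbit_basic hv hvfp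
  have hcsucc : ∀ j, c (j + 1) = u (c j) := fun j => by
    rw [hcdef]; simp only []; rw [zpow_succ_apply, hcu]
  have hdsucc : ∀ j, d (j + 1) = v (d j) := fun j => by
    rw [hddef]; simp only []; rw [zpow_succ_apply, hcv]
  have hc0 : c 0 = 0 := by simp [hcdef]
  have hd0 : d 0 = 0 := by simp [hddef]
  have hu0 : 0 < u 0 := hufp 0
  have hv0 : 0 < v 0 := hvfp 0
  set ℓ : ℝ → ℝ := fun t => t * (v 0 / u 0) with hldef
  have hlmono : StrictMono ℓ := fun p q hpq => by
    apply mul_lt_mul_of_pos_right hpq (div_pos hv0 hu0)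
  set F : ℤ → ℝ → ℝ := fun j t => (Ev ^ j) (ℓ ((Eu ^ (-j)) t)) with hFdef
  have hFmono : ∀ j, StrictMono (F j) := by
    intro j p q hpq
    exact ((hv.zpowPerm j).1) (hlmono (((hu.zpowPerm (-j)).1) hpq))
  have hkey1 : ∀ j, (Eu ^ (-j)) (c j) = 0 := by
    intro j; rw [hcdef]; simp only []; rw [zpow_apply_add]; simp
  have hkey2 : ∀ j, (Eu ^ (-j)) (c (j + 1)) = u 0 := by
    intro j; rw [hcdef]; simp only []; rw [zpow_apply_add]
    have : (-j) + (j + 1) = 1 := by ring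
    rw [this, zpow_one, hcu]
  have hl0 : ℓ 0 = 0 := by simp [hldef]
  have hlu0 : ℓ (u 0) = v 0 := by
    rw [hldef]; field_simp
  have hkey3 : ∀ j, (Ev ^ j) 0 = d j := fun j => rfl
  have hkey4 : ∀ j, (Ev ^ j) (v 0) = d (j + 1) := by
    intro j
    have : v 0 = (Ev ^ (1:ℤ)) 0 := by rw [zpow_one]; rfl
    rw [this, zpow_apply_add]
  have hmaps : ∀ j, MapsTo (F j) (Ico (c j) (c (j + 1))) (Ico (d j) (d (j + 1))) := by
    intro j t ⟨ht1, ht2⟩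
    constructor
    · rw [hFdef]
      simp only []
      calc d j = (Ev ^ j) (ℓ ((Eu ^ (-j)) (c j))) := by rw [hkey1, hl0, hkey3]
        _ ≤ (Ev ^ j) (ℓ ((Eu ^ (-j)) t)) := by
            apply ((hv.zpowPerm j).1.monotone)
            exact (hlmono.monotone (((hu.zpowPerm (-j)).1.monotone) ht1))
    · rw [hFdef]
      simp only []
      calc (Ev ^ j) (ℓ ((Eu ^ (-j)) t)) < (Ev ^ j) (ℓ ((Eu ^ (-j)) (c (j+1)))) := by
            apply ((hv.zpowPerm j).1)
            exact (hlmono (((hu.zpowPerm (-j)).1) ht2))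
        _ = d (j + 1) := by rw [hkey2, hlu0, hkey4]
  have hsurj : ∀ j, SurjOn (F j) (Ico (c j) (c (j + 1))) (Ico (d j) (d (j + 1))) := by
    intro j z ⟨hz1, hz2⟩
    set s := ((Ev ^ j).symm z) with hsdef
    have hs1 : (Ev ^ j) s = z := (Ev ^ j).apply_symm_apply z
    have hsmem : s ∈ Ico (0:ℝ) (v 0) := by
      constructor
      · have : (Ev ^ j) ((0:ℝ)) = d j := hkey3 j
        have h2 : (Ev ^ j) 0 ≤ (Ev ^ j) s := by rw [hs1, this]; exact hz1
        exact le_of_not_gt fun hcon => absurd ((hv.zpowPerm j).1 hcon) (not_lt.mpr h2)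
      · have h2 : (Ev ^ j) s < (Ev ^ j) (v 0) := by rw [hs1, hkey4]; exact hz2
        exact (hv.zpowPerm j).1.lt_iff_lt.mp h2
    set w := s * (u 0 / v 0) with hwdef
    have hlw : ℓ w = s := by rw [hldef, hwdef]; field_simp
    have hwmem : w ∈ Ico (0:ℝ) (u 0) := by
      constructor
      · exact mul_nonneg hsmem.1 (le_of_lt (div_pos hu0 hv0))
      · have := mul_lt_mul_of_pos_right hsmem.2 (div_pos hu0 hv0)
        rw [hwdef]
        calc s * (u 0 / v 0) < v 0 * (u 0 / v 0) := this
          _ = u 0 := by field_simp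
    set t := (Eu ^ j) w with htdef
    have hti : (Eu ^ (-j)) t = w := by
      rw [htdef, zpow_apply_add]; simp
    refine ⟨t, ⟨?_, ?_⟩, ?_⟩
    · have : (Eu ^ j) 0 ≤ (Eu ^ j) w := ((hu.zpowPerm j).1.monotone) hwmem.1
      rw [htdef]; exact this
    · have h5 : (Eu ^ j) w < (Eu ^ j) (u 0) := ((hu.zpowPerm j).1) hwmem.2
      have h6 : (Eu ^ j) (u 0) = c (j + 1) := by
        have : u 0 = (Eu ^ (1:ℤ)) 0 := by rw [zpow_one]; rfl
        rw [this, zpow_apply_add]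
      rw [htdef]; rw [h6] at h5; exact h5
    · rw [hFdef]; simp only []; rw [hti, hlw, hs1]
  obtain ⟨k, hkSMS, hkeval⟩ := glueR c d hcm hdm hct hcb hdt hdb F
    (fun j => (hFmono j).strictMonoOn _) hmaps hsurj
  refine ⟨k, hkSMS, ?_⟩
  intro t
  have hfloor : ∃ j, c j ≤ t ∧ t < c (j + 1) :=
    zfloor_exists c hcm ((hcb.eventually_le_atBot t).exists)
      ((hct.eventually_ge_atTop (t+1)).exists.imp (fun j hj => by linarith))
  obtain ⟨j, hj1, hj2⟩ := hfloor
  have hut : u t ∈ Ico (c (j + 1)) (c (j + 1 + 1)) := by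
    constructor
    · rw [hcsucc j]; exact hu.1.monotone hj1
    · rw [hcsucc (j + 1)]; exact hu.1 hj2
  rw [hkeval (j+1) (u t) hut, hkeval j t ⟨hj1, hj2⟩]
  rw [hFdef]
  simp only []
  have harg : (Eu ^ (-(j+1))) (u t) = (Eu ^ (-j)) t := by
    have h7 : u t = (Eu ^ (1:ℤ)) t := by rw [zpow_one]; rfl
    rw [h7, zpow_apply_add]
    have : (-(j+1)) + 1 = -j := by ring
    rw [this]
  rw [harg]
  rw [zpow_succ_apply]
  rfl

/-! ### transport of a bounded open interval onto ℝ -/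

def gapE (a b x : ℝ) : ℝ := 1 / (b - x) - 1 / (x - a)

theorem gapE_strictMonoOn {a b : ℝ} (hab : a < b) : StrictMonoOn (gapE a b) (Ioo a b) := by
  intro x hx y hy hxy
  unfold gapE
  have h1 : 1 / (b - x) < 1 / (b - y) := by
    apply one_div_lt_one_div_of_lt
    · linarith [hy.2]
    · linarith
  have h2 : 1 / (y - a) < 1 / (x - a) := by
    apply one_div_lt_one_div_of_lt
    · linarith [hx.1]
    · linarith
  linarith

theorem gapE_continuousOn {a b : ℝ} (hab : a < b) : ContinuousOn (gapE a b) (Ioo a b) := by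
  unfold gapE
  apply ContinuousOn.sub
  · exact continuousOn_const.div (continuous_const.sub continuous_id).continuousOn
      (fun x hx => sub_ne_zero.mpr (ne_of_gt hx.2))
  · exact continuousOn_const.div (continuous_id.sub continuous_const).continuousOn
      (fun x hx => sub_ne_zero.mpr (ne_of_gt hx.1))

theorem gapE_reflect {a b x : ℝ} : gapE a b (a + b - x) = -gapE a b x := by
  unfold gapE
  have h1 : b - (a + b - x) = x - a := by ring
  have h2 : a + b - x - a = b - x := by ring
  rw [h1, h2]
  ring

theorem gapE_small {a b : ℝ} (hab : a < b) (t : ℝ) : ∃ x ∈ Ioo a b, gapE a b x ≤ t := by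
  have hba : 0 < b - a := by linarith
  have hd2 : 0 < 2 / (b - a) := by positivity
  set D : ℝ := 1 + |t| + 2 / (b - a) with hD
  have hDpos : 0 < D := by positivity
  set δ : ℝ := min ((b - a) / 2) (1 / D) with hδ
  have hδpos : 0 < δ := lt_min (by linarith) (by positivity)
  refine ⟨a + δ, ⟨by linarith, by
    have : δ ≤ (b - a) / 2 := min_le_left _ _
    linarith⟩, ?_⟩
  unfold gapE
  have e1 : b - (a + δ) = b - a - δ := by ring
  have e2 : a + δ - a = δ := by ring
  rw [e1, e2]
  have hδhalf : δ ≤ (b - a) / 2 := min_le_left _ _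
  have hb1 : 1 / (b - a - δ) ≤ 2 / (b - a) := by
    have h3 : (b - a) / 2 ≤ b - a - δ := by linarith
    have h4 : (0:ℝ) < (b - a) / 2 := by linarith
    calc 1 / (b - a - δ) ≤ 1 / ((b - a) / 2) := by
          apply one_div_le_one_div_of_le h4 h3
      _ = 2 / (b - a) := by rw [one_div_div]
  have hb2 : D ≤ 1 / δ := by
    have h5 : δ ≤ 1 / D := min_le_right _ _
    calc D = 1 / (1 / D) := by field_simp
      _ ≤ 1 / δ := one_div_le_one_div_of_le hδpos h5
  have : 1 / (b - a - δ) - 1 / δ ≤ 2 / (b - a) - D := by linarith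
  rw [hD] at this
  have habs : -1 - |t| ≤ t := by
    rcases abs_cases t with ⟨h, _⟩ | ⟨h, _⟩ <;> linarith
  linarith

theorem gapE_surjOn {a b : ℝ} (hab : a < b) : SurjOn (gapE a b) (Ioo a b) univ := by
  intro t _
  obtain ⟨x₁, hx₁, hE₁⟩ := gapE_small hab t
  obtain ⟨x₂', hx₂', hE₂'⟩ := gapE_small hab (-t)
  set x₂ := a + b - x₂' with hx₂def
  have hx₂ : x₂ ∈ Ioo a b := ⟨by simp [hx₂def]; linarith [hx₂'.2], by simp [hx₂def]; linarith [hx₂'.1]⟩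
  have hE₂ : t ≤ gapE a b x₂ := by
    rw [hx₂def, gapE_reflect]; linarith
  rcases le_total x₁ x₂ with hle | hle
  · have hsub : Icc x₁ x₂ ⊆ Ioo a b := fun z hz =>
      ⟨lt_of_lt_of_le hx₁.1 hz.1, lt_of_le_of_lt hz.2 hx₂.2⟩
    have := intermediate_value_Icc hle ((gapE_continuousOn hab).mono hsub)
    obtain ⟨z, hz, hzE⟩ := this ⟨hE₁, hE₂⟩
    exact ⟨z, hsub hz, hzE⟩
  · have : gapE a b x₂ ≤ gapE a b x₁ := by
      rcases eq_or_lt_of_le hle with heq | hlt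
      · rw [heq]
      · exact ((gapE_strictMonoOn hab) hx₂ hx₁ hlt).le
    have h7 : gapE a b x₁ = t := le_antisymm hE₁ (by linarith)
    exact ⟨x₁, hx₁, h7⟩

def gapEinv {a b : ℝ} (hab : a < b) (t : ℝ) : ℝ :=
  (gapE_surjOn hab (mem_univ t)).choose

theorem gapEinv_spec {a b : ℝ} (hab : a < b) (t : ℝ) :
    gapEinv hab t ∈ Ioo a b ∧ gapE a b (gapEinv hab t) = t :=
  ⟨(gapE_surjOn hab (mem_univ t)).choose_spec.1, (gapE_surjOn hab (mem_univ t)).choose_spec.2⟩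

theorem gapEinv_gapE {a b : ℝ} (hab : a < b) {x : ℝ} (hx : x ∈ Ioo a b) :
    gapEinv hab (gapE a b x) = x := by
  have hs := gapEinv_spec hab (gapE a b x)
  exact (gapE_strictMonoOn hab).injOn hs.1 hx hs.2

theorem gapEinv_strictMono {a b : ℝ} (hab : a < b) : StrictMono (gapEinv hab) := by
  intro s t hst
  have hs := gapEinv_spec hab s
  have ht := gapEinv_spec hab t
  rcases lt_trichotomy (gapEinv hab s) (gapEinv hab t) with h | h | h
  · exact h
  · exfalso; rw [← hs.2, ← ht.2, h] at hst; exact lt_irrefl _ hst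
  · exfalso
    have := (gapE_strictMonoOn hab) ht.1 hs.1 h
    rw [hs.2, ht.2] at this
    linarith

/-- inverse of a strictly monotone self-bijection of a gap -/
theorem gap_inverse {a b : ℝ} (u : ℝ → ℝ)
    (hm : StrictMonoOn u (Ioo a b)) (hmap : MapsTo u (Ioo a b) (Ioo a b))
    (hsur : SurjOn u (Ioo a b) (Ioo a b)) :
    ∃ w : ℝ → ℝ, StrictMonoOn w (Ioo a b) ∧ MapsTo w (Ioo a b) (Ioo a b) ∧
      SurjOn w (Ioo a b) (Ioo a b) ∧ (∀ x ∈ Ioo a b, w (u x) = x) ∧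
      (∀ y ∈ Ioo a b, u (w y) = y) := by
  classical
  set w : ℝ → ℝ := fun y => if h : y ∈ Ioo a b then (hsur h).choose else y with hw
  have hwmem : ∀ y ∈ Ioo a b, w y ∈ Ioo a b ∧ u (w y) = y := by
    intro y hy
    rw [hw]; simp only [dif_pos hy]
    exact ⟨(hsur hy).choose_spec.1, (hsur hy).choose_spec.2⟩
  have hwu : ∀ x ∈ Ioo a b, w (u x) = x := by
    intro x hx
    have h1 := hwmem (u x) (hmap hx)
    exact hm.injOn h1.1 hx h1.2
  refine ⟨w, ?_, fun y hy => (hwmem y hy).1, ?_, hwu, fun y hy => (hwmem y hy).2⟩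
  · intro y hy z hz hyz
    by_contra hcon
    push_neg at hcon
    rcases eq_or_lt_of_le hcon with heq | hlt
    · rw [← (hwmem y hy).2, ← (hwmem z hz).2, heq] at hyz; exact lt_irrefl _ hyz
    · have := hm (hwmem z hz).1 (hwmem y hy).1 hlt
      rw [(hwmem y hy).2, (hwmem z hz).2] at this
      linarith
  · intro x hx
    exact ⟨u x, hmap hx, hwu x hx⟩

/-- conjugacy of fpf (above id) gap maps -/
theorem fpf_conj_gap {a b a' b' : ℝ} (hab : a < b) (hab' : a' < b')
    (u v : ℝ → ℝ)
    (hum : StrictMonoOn u (Ioo a b)) (humap : MapsTo u (Ioo a b) (Ioo a b))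
    (husur : SurjOn u (Ioo a b) (Ioo a b)) (hufp : ∀ x ∈ Ioo a b, x < u x)
    (hvm : StrictMonoOn v (Ioo a' b')) (hvmap : MapsTo v (Ioo a' b') (Ioo a' b'))
    (hvsur : SurjOn v (Ioo a' b') (Ioo a' b')) (hvfp : ∀ x ∈ Ioo a' b', x < v x) :
    ∃ k : ℝ → ℝ, StrictMonoOn k (Ioo a b) ∧ MapsTo k (Ioo a b) (Ioo a' b') ∧
      SurjOn k (Ioo a b) (Ioo a' b') ∧ ∀ x ∈ Ioo a b, k (u x) = v (k x) := by
  set U : ℝ → ℝ := fun t => gapE a b (u (gapEinv hab t)) with hU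
  set V : ℝ → ℝ := fun t => gapE a' b' (v (gapEinv hab' t)) with hV
  have hUS : SMS U := by
    constructor
    · intro p q hpq
      have h1 := gapEinv_strictMono hab hpq
      have m1 := (gapEinv_spec hab p).1
      have m2 := (gapEinv_spec hab q).1
      exact (gapE_strictMonoOn hab) (humap m1) (humap m2) (hum m1 m2 h1)
    · intro t
      obtain ⟨w, hwm, hwu⟩ := husur (gapEinv_spec hab t).1
      refine ⟨gapE a b w, ?_⟩
      rw [hU]
      simp only []
      rw [gapEinv_gapE hab hwm, hwu, (gapEinv_spec hab t).2]
  have hVS : SMS V := by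
    constructor
    · intro p q hpq
      have h1 := gapEinv_strictMono hab' hpq
      have m1 := (gapEinv_spec hab' p).1
      have m2 := (gapEinv_spec hab' q).1
      exact (gapE_strictMonoOn hab') (hvmap m1) (hvmap m2) (hvm m1 m2 h1)
    · intro t
      obtain ⟨w, hwm, hwu⟩ := hvsur (gapEinv_spec hab' t).1
      refine ⟨gapE a' b' w, ?_⟩
      rw [hV]
      simp only []
      rw [gapEinv_gapE hab' hwm, hwu, (gapEinv_spec hab' t).2]
  have hUfp : ∀ t, t < U t := by
    intro t
    have m1 := (gapEinv_spec hab t).1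
    have h1 := hufp _ m1
    have := (gapE_strictMonoOn hab) m1 (humap m1) h1
    rw [(gapEinv_spec hab t).2] at this
    exact this
  have hVfp : ∀ t, t < V t := by
    intro t
    have m1 := (gapEinv_spec hab' t).1
    have h1 := hvfp _ m1
    have := (gapE_strictMonoOn hab') m1 (hvmap m1) h1
    rw [(gapEinv_spec hab' t).2] at this
    exact this
  obtain ⟨Φ, hΦS, hΦc⟩ := fpf_conj_R hUS hVS hUfp hVfp
  set k : ℝ → ℝ := fun x => gapEinv hab' (Φ (gapE a b x)) with hk
  have hkmem : ∀ x, k x ∈ Ioo a' b' := fun x => (gapEinv_spec hab' _).1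
  refine ⟨k, ?_, fun x _ => hkmem x, ?_, ?_⟩
  · intro x hx y hy hxy
    exact gapEinv_strictMono hab' (hΦS.1 ((gapE_strictMonoOn hab) hx hy hxy))
  · intro y hy
    obtain ⟨s, hs⟩ := hΦS.2 (gapE a' b' y)
    refine ⟨gapEinv hab s, (gapEinv_spec hab s).1, ?_⟩
    rw [hk]
    simp only []
    rw [(gapEinv_spec hab s).2, hs, gapEinv_gapE hab' hy]
  · intro x hx
    rw [hk]
    simp only []
    have h1 : gapE a b (u x) = U (gapE a b x) := by
      rw [hU]; simp only []; rw [gapEinv_gapE hab hx]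
    rw [h1, hΦc]
    have h2 : V (Φ (gapE a b x)) = gapE a' b' (v (k x)) := by
      rw [hV]
    rw [h2, gapEinv_gapE hab' (hvmap (hkmem x))]

/-- conjugacy of fpf (below id) gap maps -/
theorem fpf_conj_gap_neg {a b a' b' : ℝ} (hab : a < b) (hab' : a' < b')
    (u v : ℝ → ℝ)
    (hum : StrictMonoOn u (Ioo a b)) (humap : MapsTo u (Ioo a b) (Ioo a b))
    (husur : SurjOn u (Ioo a b) (Ioo a b)) (hufp : ∀ x ∈ Ioo a b, u x < x)
    (hvm : StrictMonoOn v (Ioo a' b')) (hvmap : MapsTo v (Ioo a' b') (Ioo a' b'))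
    (hvsur : SurjOn v (Ioo a' b') (Ioo a' b')) (hvfp : ∀ x ∈ Ioo a' b', v x < x) :
    ∃ k : ℝ → ℝ, StrictMonoOn k (Ioo a b) ∧ MapsTo k (Ioo a b) (Ioo a' b') ∧
      SurjOn k (Ioo a b) (Ioo a' b') ∧ ∀ x ∈ Ioo a b, k (u x) = v (k x) := by
  obtain ⟨uw, huwm, huwmap, huwsur, huwl, huwr⟩ := gap_inverse u hum humap husur
  obtain ⟨vw, hvwm, hvwmap, hvwsur, hvwl, hvwr⟩ := gap_inverse v hvm hvmap hvsur
  have huwfp : ∀ x ∈ Ioo a b, x < uw x := by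
    intro x hx
    have h1 := hufp (uw x) (huwmap hx)
    rw [huwr x hx] at h1
    exact h1
  have hvwfp : ∀ x ∈ Ioo a' b', x < vw x := by
    intro x hx
    have h1 := hvfp (vw x) (hvwmap hx)
    rw [hvwr x hx] at h1
    exact h1
  obtain ⟨k, hkm, hkmap, hksur, hkc⟩ := fpf_conj_gap hab hab' uw vw
    huwm huwmap huwsur huwfp hvwm hvwmap hvwsur hvwfp
  refine ⟨k, hkm, hkmap, hksur, ?_⟩
  intro x hx
  have h1 := hkc (u x) (humap hx)
  rw [huwl x hx] at h1
  have h2 : v (k x) = v (vw (k (u x))) := by rw [← h1]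
  rw [hvwr _ (hkmap (humap hx))] at h2
  exact h2.symm

/-- Reversibility from an alternating discrete fixed-point pattern.
On even gaps φ < id, on odd gaps φ > id. -/
theorem reversal {φ : ℝ → ℝ} (hφ : SMS φ) (c : ℤ → ℝ) (hcm : StrictMono c)
    (hct : Tendsto c atTop atTop) (hcb : Tendsto c atBot atBot)
    (hfix : ∀ j, φ (c j) = c j)
    (hsE : ∀ j, Even j → ∀ x ∈ Ioo (c j) (c (j + 1)), φ x < x)
    (hsO : ∀ j, ¬ Even j → ∀ x ∈ Ioo (c j) (c (j + 1)), x < φ x) :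
    ∃ k, SMS k ∧ ∀ x, k (φ x) = hφ.perm.symm (k x) := by
  classical
  set φi : ℝ → ℝ := ⇑hφ.perm.symm with hφi
  have hφiSMS : SMS φi := hφ.symm
  have hφil : ∀ x, φi (φ x) = x := fun x => hφ.perm.symm_apply_apply x
  have hφir : ∀ x, φ (φi x) = x := fun x => hφ.perm.apply_symm_apply x
  have hifix : ∀ j, φi (c j) = c j := by
    intro j
    have := congrArg φi (hfix j)
    rw [hφil] at this
    exact this.symm
  have hgaplt : ∀ j : ℤ, c j < c (j + 1) := fun j => hcm (by omega)
  have hmapφ : ∀ j, MapsTo φ (Ioo (c j) (c (j + 1))) (Ioo (c j) (c (j + 1))) := by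
    intro j x hx
    constructor
    · have := hφ.1 hx.1; rw [hfix] at this; exact this
    · have := hφ.1 hx.2; rw [hfix] at this; exact this
  have hmapφi : ∀ j, MapsTo φi (Ioo (c j) (c (j + 1))) (Ioo (c j) (c (j + 1))) := by
    intro j x hx
    constructor
    · have := hφiSMS.1 hx.1; rw [hifix] at this; exact this
    · have := hφiSMS.1 hx.2; rw [hifix] at this; exact this
  have hsurφ : ∀ j, SurjOn φ (Ioo (c j) (c (j + 1))) (Ioo (c j) (c (j + 1))) := by
    intro j y hy
    exact ⟨φi y, hmapφi j hy, hφir y⟩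
  have hsurφi : ∀ j, SurjOn φi (Ioo (c j) (c (j + 1))) (Ioo (c j) (c (j + 1))) := by
    intro j y hy
    exact ⟨φ y, hmapφ j hy, hφil y⟩
  -- signs of φi
  have hsiE : ∀ j, Even j → ∀ x ∈ Ioo (c j) (c (j + 1)), x < φi x := by
    intro j hj x hx
    have h1 := hsE j hj (φi x) (hmapφi j hx)
    rw [hφir] at h1
    exact h1
  have hsiO : ∀ j, ¬ Even j → ∀ x ∈ Ioo (c j) (c (j + 1)), φi x < x := by
    intro j hj x hx
    have h1 := hsO j hj (φi x) (hmapφi j hx)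
    rw [hφir] at h1
    exact h1
  -- per-gap conjugators
  have hkj : ∀ j : ℤ, ∃ kj : ℝ → ℝ,
      StrictMonoOn kj (Ioo (c j) (c (j + 1))) ∧
      MapsTo kj (Ioo (c j) (c (j + 1))) (Ioo (c (j + 1)) (c (j + 1 + 1))) ∧
      SurjOn kj (Ioo (c j) (c (j + 1))) (Ioo (c (j + 1)) (c (j + 1 + 1))) ∧
      ∀ x ∈ Ioo (c j) (c (j + 1)), kj (φ x) = φi (kj x) := by
    intro j
    by_cases hj : Even j
    · -- φ < id on gap j ; φi < id on gap (j+1) (since j+1 odd)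
      have hj1 : ¬ Even (j + 1) := by simp [Int.even_add_one, hj]
      exact fpf_conj_gap_neg (hgaplt j) (hgaplt (j + 1)) φ φi
        (hφ.1.strictMonoOn _) (hmapφ j) (hsurφ j) (hsE j hj)
        (hφiSMS.1.strictMonoOn _) (hmapφi (j + 1)) (hsurφi (j + 1)) (hsiO (j + 1) hj1)
    · have hj1 : Even (j + 1) := Int.even_add_one.mpr hj
      exact fpf_conj_gap (hgaplt j) (hgaplt (j + 1)) φ φi
        (hφ.1.strictMonoOn _) (hmapφ j) (hsurφ j) (hsO j hj)
        (hφiSMS.1.strictMonoOn _) (hmapφi (j + 1)) (hsurφi (j + 1)) (hsiE (j + 1) hj1)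
  set kfun : ℤ → ℝ → ℝ := fun j => (hkj j).choose with hkfun
  have hkspec : ∀ j, StrictMonoOn (kfun j) (Ioo (c j) (c (j + 1))) ∧
      MapsTo (kfun j) (Ioo (c j) (c (j + 1))) (Ioo (c (j + 1)) (c (j + 1 + 1))) ∧
      SurjOn (kfun j) (Ioo (c j) (c (j + 1))) (Ioo (c (j + 1)) (c (j + 1 + 1))) ∧
      ∀ x ∈ Ioo (c j) (c (j + 1)), kfun j (φ x) = φi (kfun j x) :=
    fun j => (hkj j).choose_spec
  set F : ℤ → ℝ → ℝ := fun j x => if x = c j then c (j + 1) else kfun j x with hF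
  set d : ℤ → ℝ := fun j => c (j + 1) with hd
  have hdm : StrictMono d := fun p q hpq => hcm (by omega)
  have hdt : Tendsto d atTop atTop := by
    apply hct.comp
    exact tendsto_atTop_add_const_right _ 1 tendsto_id
  have hdb : Tendsto d atBot atBot := by
    apply hcb.comp
    exact tendsto_atBot_add_const_right _ 1 tendsto_id
  have hioo_of_ico : ∀ j (x : ℝ), x ∈ Ico (c j) (c (j + 1)) → x ≠ c j →
      x ∈ Ioo (c j) (c (j + 1)) := by
    intro j x hx hne
    exact ⟨lt_of_le_of_ne hx.1 (Ne.symm hne), hx.2⟩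
  have hmono : ∀ j, StrictMonoOn (F j) (Ico (c j) (c (j + 1))) := by
    intro j x hx y hy hxy
    rw [hF]
    simp only []
    by_cases hxc : x = c j
    · rw [if_pos hxc]
      have hyc : y ≠ c j := by
        intro hyc
        rw [hxc, hyc] at hxy
        exact lt_irrefl _ hxy
      rw [if_neg hyc]
      exact ((hkspec j).2.1 (hioo_of_ico j y hy hyc)).1
    · have hyc : y ≠ c j := by
        intro hyc
        have := hx.1
        rw [← hyc] at this
        exact absurd hxy (not_lt.mpr this)
      rw [if_neg hxc, if_neg hyc]
      exact (hkspec j).1 (hioo_of_ico j x hx hxc) (hioo_of_ico j y hy hyc) hxy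
  have hmaps : ∀ j, MapsTo (F j) (Ico (c j) (c (j + 1))) (Ico (d j) (d (j + 1))) := by
    intro j x hx
    rw [hF, hd]
    simp only []
    by_cases hxc : x = c j
    · rw [if_pos hxc]
      exact ⟨le_refl _, hcm (by omega)⟩
    · rw [if_neg hxc]
      have := (hkspec j).2.1 (hioo_of_ico j x hx hxc)
      exact ⟨this.1.le, this.2⟩
  have hsurj : ∀ j, SurjOn (F j) (Ico (c j) (c (j + 1))) (Ico (d j) (d (j + 1))) := by
    intro j y hy
    rw [hd] at hy
    by_cases hyc : y = c (j + 1)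
    · refine ⟨c j, ⟨le_refl _, hgaplt j⟩, ?_⟩
      simp [hF, hyc]
    · have hymem : y ∈ Ioo (c (j + 1)) (c (j + 1 + 1)) :=
        ⟨lt_of_le_of_ne hy.1 (Ne.symm hyc), hy.2⟩
      obtain ⟨x, hxm, hxe⟩ := (hkspec j).2.2.1 hymem
      refine ⟨x, ⟨hxm.1.le, hxm.2⟩, ?_⟩
      rw [hF]; simp only []
      rw [if_neg (ne_of_gt hxm.1)]
      exact hxe
  obtain ⟨k, hkSMS, hkeval⟩ := glueR c d hcm hdm hct hcb hdt hdb F hmono hmaps hsurj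
  refine ⟨k, hkSMS, ?_⟩
  intro x
  have hfloor : ∃ j, c j ≤ x ∧ x < c (j + 1) :=
    zfloor_exists c hcm ((hcb.eventually_le_atBot x).exists)
      ((hct.eventually_ge_atTop (x + 1)).exists.imp (fun j hj => by linarith))
  obtain ⟨j, hj1, hj2⟩ := hfloor
  by_cases hxc : x = c j
  · subst hxc
    rw [hfix j]
    have h1 : k (c j) = c (j + 1) := by
      rw [hkeval j (c j) ⟨le_refl _, hj2⟩]
      simp [hF]
    rw [h1, hifix]
  · have hxm : x ∈ Ioo (c j) (c (j + 1)) := ⟨lt_of_le_of_ne hj1 (Ne.symm hxc), hj2⟩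
    have hφxm := hmapφ j hxm
    have h1 : k (φ x) = kfun j (φ x) := by
      rw [hkeval j (φ x) ⟨hφxm.1.le, hφxm.2⟩, hF]
      simp only []
      rw [if_neg (ne_of_gt hφxm.1)]
    have h2 : k x = kfun j x := by
      rw [hkeval j x ⟨hj1, hj2⟩, hF]
      simp only []
      rw [if_neg hxc]
    rw [h1, h2]
    exact (hkspec j).2.2.2 x hxm

/-! ### envelopes, standard tails, binary gluing -/

def Mf (f : ℝ → ℝ) : ℝ → ℝ := fun x => max (f x) x
def mf (f : ℝ → ℝ) : ℝ → ℝ := fun x => min (f x) x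

theorem Mf_SMS {f : ℝ → ℝ} (hf : SMS f) : SMS (Mf f) := by
  constructor
  · intro x y hxy
    exact max_lt_max (hf.1 hxy) hxy
  · intro y
    rcases le_total (hf.perm.symm y) y with h | h
    · refine ⟨hf.perm.symm y, ?_⟩
      unfold Mf
      rw [hf.perm_symm_apply_comp]
      exact max_eq_left h
    · refine ⟨y, ?_⟩
      unfold Mf
      have : f y ≤ y := by
        have h2 := hf.symm_strictMono.le_iff_le.mpr (le_refl y)
        -- f y ≤ y ↔ y ≤ finv y ... prove directly
        by_contra hc
        push_neg at hc
        have h3 : hf.perm.symm y < hf.perm.symm (f y) := hf.symm_strictMono hc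
        rw [hf.perm_symm_comp_apply] at h3
        linarith
      exact max_eq_right this

theorem mf_SMS {f : ℝ → ℝ} (hf : SMS f) : SMS (mf f) := by
  constructor
  · intro x y hxy
    exact min_lt_min (hf.1 hxy) hxy
  · intro y
    rcases le_total y (hf.perm.symm y) with h | h
    · refine ⟨hf.perm.symm y, ?_⟩
      unfold mf
      rw [hf.perm_symm_apply_comp]
      exact min_eq_left h
    · refine ⟨y, ?_⟩
      unfold mf
      have : y ≤ f y := by
        by_contra hc
        push_neg at hc
        have h3 : hf.perm.symm (f y) < hf.perm.symm y := hf.symm_strictMono hc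
        rw [hf.perm_symm_comp_apply] at h3
        linarith
      exact min_eq_right this

theorem Mf_le (f : ℝ → ℝ) (x : ℝ) : f x ≤ Mf f x := le_max_left _ _
theorem Mf_le' (f : ℝ → ℝ) (x : ℝ) : x ≤ Mf f x := le_max_right _ _
theorem mf_le (f : ℝ → ℝ) (x : ℝ) : mf f x ≤ f x := min_le_left _ _
theorem mf_le' (f : ℝ → ℝ) (x : ℝ) : mf f x ≤ x := min_le_right _ _

def Ha (f : ℝ → ℝ) (a : ℝ) : ℝ → ℝ := fun x => Mf f (x + a) + a
def Lb (f : ℝ → ℝ) (b : ℝ) : ℝ → ℝ := fun x => mf f (x - b) - b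

theorem Ha_SMS {f : ℝ → ℝ} (hf : SMS f) (a : ℝ) : SMS (Ha f a) := by
  have h1 := Mf_SMS hf
  constructor
  · intro x y hxy
    unfold Ha
    have := h1.1 (show x + a < y + a by linarith)
    linarith
  · intro y
    obtain ⟨z, hz⟩ := h1.2 (y - a)
    exact ⟨z - a, by unfold Ha; rw [sub_add_cancel, hz]; ring⟩

theorem Lb_SMS {f : ℝ → ℝ} (hf : SMS f) (b : ℝ) : SMS (Lb f b) := by
  have h1 := mf_SMS hf
  constructor
  · intro x y hxy
    unfold Lb
    have := h1.1 (show x - b < y - b by linarith)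
    linarith
  · intro y
    obtain ⟨z, hz⟩ := h1.2 (y + b)
    exact ⟨z + b, by unfold Lb; rw [add_sub_cancel_right, hz]; ring⟩

theorem Ha_gt {f : ℝ → ℝ} (hf : SMS f) {a : ℝ} (ha : 0 < a) (x : ℝ) :
    Mf f x < Ha f a x := by
  unfold Ha
  have := (Mf_SMS hf).1 (show x < x + a by linarith)
  linarith

theorem Lb_lt {f : ℝ → ℝ} (hf : SMS f) {b : ℝ} (hb : 0 < b) (x : ℝ) :
    Lb f b x < mf f x := by
  unfold Lb
  have := (mf_SMS hf).1 (show x - b < x by linarith)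
  linarith

theorem Ha_gt_f {f : ℝ → ℝ} (hf : SMS f) {a : ℝ} (ha : 0 < a) (x : ℝ) :
    f x < Ha f a x := lt_of_le_of_lt (Mf_le f x) (Ha_gt hf ha x)

theorem Ha_gt_id {f : ℝ → ℝ} (hf : SMS f) {a : ℝ} (ha : 0 < a) (x : ℝ) :
    x < Ha f a x := lt_of_le_of_lt (Mf_le' f x) (Ha_gt hf ha x)

theorem Lb_lt_f {f : ℝ → ℝ} (hf : SMS f) {b : ℝ} (hb : 0 < b) (x : ℝ) :
    Lb f b x < f x := lt_of_lt_of_le (Lb_lt hf hb x) (mf_le f x)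

theorem Lb_lt_id {f : ℝ → ℝ} (hf : SMS f) {b : ℝ} (hb : 0 < b) (x : ℝ) :
    Lb f b x < x := lt_of_lt_of_le (Lb_lt hf hb x) (mf_le' f x)

/-- inverse relations between tails of `f` and of `f⁻¹` -/
theorem Ha_inv_Lb {f : ℝ → ℝ} (hf : SMS f) (a : ℝ) (x : ℝ) :
    Ha (⇑hf.perm.symm) a (Lb f a x) = x := by
  unfold Ha Lb Mf mf
  set w := x - a with hw
  have hfl : ∀ z, hf.perm.symm (f z) = z := fun z => hf.perm_symm_comp_apply z
  have hfr : ∀ z, f (hf.perm.symm z) = z := fun z => hf.perm_symm_apply_comp z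
  rcases le_total (f w) w with h | h
  · rw [min_eq_left h]
    have e1 : f w - a + a = f w := by ring
    rw [e1, hfl]
    rw [max_eq_left h]
    rw [hw]; ring
  · rw [min_eq_right h]
    have e1 : w - a + a = w := by ring
    rw [e1]
    have h2 : hf.perm.symm w ≤ w := by
      by_contra hc
      push_neg at hc
      have := hf.1 hc
      rw [hfr] at this
      linarith
    rw [max_eq_right h2, hw]; ring

theorem Lb_inv_Ha {f : ℝ → ℝ} (hf : SMS f) (b : ℝ) (x : ℝ) :
    Lb (⇑hf.perm.symm) b (Ha f b x) = x := by
  unfold Ha Lb Mf mf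
  set w := x + b with hw
  have hfl : ∀ z, hf.perm.symm (f z) = z := fun z => hf.perm_symm_comp_apply z
  have hfr : ∀ z, f (hf.perm.symm z) = z := fun z => hf.perm_symm_apply_comp z
  rcases le_total (f w) w with h | h
  · rw [max_eq_right h]
    have e1 : w + b - b = w := by ring
    rw [e1]
    have h2 : w ≤ hf.perm.symm w := by
      by_contra hc
      push_neg at hc
      have := hf.1 hc
      rw [hfr] at this
      linarith
    rw [min_eq_right h2, hw]; ring
  · rw [max_eq_left h]
    have e1 : f w + b - b = f w := by ring
    rw [e1, hfl]
    rw [min_eq_left h, hw]; ring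

/-! binary gluing -/

def glu (s : ℝ) (F G : ℝ → ℝ) : ℝ → ℝ := fun x => if x ≤ s then F x else G x

theorem glu_left {s : ℝ} {F G : ℝ → ℝ} {x : ℝ} (hx : x ≤ s) : glu s F G x = F x :=
  if_pos hx

theorem glu_right {s : ℝ} {F G : ℝ → ℝ} (heq : F s = G s) {x : ℝ} (hx : s ≤ x) :
    glu s F G x = G x := by
  unfold glu
  rcases eq_or_lt_of_le hx with h | h
  · subst h
    rw [if_pos (le_refl s), heq]
  · rw [if_neg (not_le.mpr h)]

theorem glu_SMS {s : ℝ} {F G : ℝ → ℝ} (hF : SMS F) (hG : SMS G) (heq : F s = G s) :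
    SMS (glu s F G) := by
  constructor
  · intro x y hxy
    unfold glu
    by_cases hx : x ≤ s
    · rw [if_pos hx]
      by_cases hy : y ≤ s
      · rw [if_pos hy]; exact hF.1 hxy
      · push_neg at hy
        rw [if_neg (not_le.mpr hy)]
        calc F x ≤ F s := hF.1.monotone hx
          _ = G s := heq
          _ < G y := hG.1 hy
    · push_neg at hx
      rw [if_neg (not_le.mpr hx)]
      have hy : ¬ y ≤ s := by push_neg; linarith
      rw [if_neg hy]
      exact hG.1 hxy
  · intro y
    rcases le_total y (F s) with h | h
    · obtain ⟨x, hx⟩ := hF.2 y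
      have hxs : x ≤ s := by
        by_contra hc
        push_neg at hc
        have := hF.1 hc
        rw [hx] at this
        linarith
      exact ⟨x, by rw [glu_left hxs]; exact hx⟩
    · obtain ⟨x, hx⟩ := hG.2 y
      have hxs : s ≤ x := by
        by_contra hc
        push_neg at hc
        have := hG.1 hc
        rw [hx, ← heq] at this
        linarith
      exact ⟨x, by rw [glu_right heq hxs]; exact hx⟩

theorem avgC_SMS {g : ℝ → ℝ} (hg : SMS g) (C : ℝ) : SMS (fun x => (g x + C) / 2) := by
  constructor
  · intro x y hxy
    have := hg.1 hxy
    simp only []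
    linarith
  · intro y
    obtain ⟨x, hx⟩ := hg.2 (2 * y - C)
    exact ⟨x, by simp only []; rw [hx]; ring⟩

theorem affh_SMS (C : ℝ) : SMS (fun x : ℝ => (x + C) / 2) := by
  constructor
  · intro x y hxy; simp only []; linarith
  · intro y; exact ⟨2 * y - C, by simp only []; ring⟩

theorem avgid_SMS {f : ℝ → ℝ} (hf : SMS f) : SMS (fun x => (f x + x) / 2) := by
  constructor
  · intro x y hxy
    have := hf.1 hxy
    simp only []
    linarith
  · intro y
    have hcont : Continuous (fun x => (f x + x) / 2) :=
      (hf.continuous.add continuous_id).div_const 2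
    set p := (Mf_SMS hf).perm.symm y with hp
    set q := (mf_SMS hf).perm.symm y with hq
    have hpv : Mf f p = y := (Mf_SMS hf).perm_symm_apply_comp y
    have hqv : mf f q = y := (mf_SMS hf).perm_symm_apply_comp y
    have hAp : (f p + p) / 2 ≤ y := by
      have h1 : f p ≤ Mf f p := Mf_le f p
      have h2 : p ≤ Mf f p := Mf_le' f p
      rw [hpv] at h1 h2
      linarith
    have hAq : y ≤ (f q + q) / 2 := by
      have h1 : mf f q ≤ f q := mf_le f q
      have h2 : mf f q ≤ q := mf_le' f q
      rw [hqv] at h1 h2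
      linarith
    rcases le_total p q with hpq | hpq
    · have := intermediate_value_Icc hpq hcont.continuousOn
      obtain ⟨x, _, hx⟩ := this ⟨hAp, hAq⟩
      exact ⟨x, hx⟩
    · have := intermediate_value_Icc' hpq hcont.continuousOn
      obtain ⟨x, _, hx⟩ := this ⟨hAp, hAq⟩
      exact ⟨x, hx⟩

theorem exists_b {f : ℝ → ℝ} (hf : SMS f) (x₅ target : ℝ) (h0 : target < mf f x₅) :
    ∃ b, 0 < b ∧ Lb f b x₅ = target := by
  set g : ℝ → ℝ := fun b => mf f (x₅ - b) - b with hg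
  have hgc : Continuous g :=
    ((mf_SMS hf).continuous.comp (continuous_const.sub continuous_id)).sub continuous_id
  set b₁ := mf f x₅ - target with hb₁def
  have hb₁ : (0:ℝ) ≤ b₁ := by rw [hb₁def]; linarith
  have hg0 : g 0 = mf f x₅ := by rw [hg]; simp
  have hgb : g b₁ ≤ target := by
    have h1 : mf f (x₅ - b₁) ≤ mf f x₅ := (mf_SMS hf).1.monotone (by linarith)
    rw [hg]
    simp only []
    rw [hb₁def]
    linarith
  have hmem : target ∈ Icc (g b₁) (g 0) := ⟨hgb, by rw [hg0]; linarith⟩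
  obtain ⟨b, hbmem, hbeq⟩ := intermediate_value_Icc' hb₁ hgc.continuousOn hmem
  refine ⟨b, ?_, hbeq⟩
  rcases eq_or_lt_of_le hbmem.1 with h | h
  · exfalso
    rw [← h, hg0] at hbeq
    linarith
  · exact h

theorem sign_dichotomy {f : ℝ → ℝ} (hf : SMS f) (K : ℝ)
    (hz : ¬ ∃ z, K ≤ z ∧ f z = z) :
    (∀ x, K ≤ x → x < f x) ∨ (∀ x, K ≤ x → f x < x) := by
  have hne : ∀ x, K ≤ x → f x ≠ x := fun x hx hfx => hz ⟨x, hx, hfx⟩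
  have hcont : Continuous (fun x => f x - x) := hf.continuous.sub continuous_id
  rcases lt_or_gt_of_ne (hne K (le_refl K)) with h | h
  · -- f K < K : claim always f x < x on [K, ∞)
    right
    intro x hx
    rcases lt_or_gt_of_ne (hne x hx) with h2 | h2
    · exact h2
    · exfalso
      have hKx : K < x := by
        rcases eq_or_lt_of_le hx with h3 | h3
        · exfalso; rw [← h3] at h2; linarith
        · exact h3
      have hmem : (0:ℝ) ∈ Icc (f K - K) (f x - x) := ⟨by linarith, by linarith⟩
      obtain ⟨z, hzm, hzv⟩ := intermediate_value_Icc hKx.le hcont.continuousOn hmem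
      have hzv' : f z - z = 0 := hzv
      exact hne z hzm.1 (by linarith)
  · left
    intro x hx
    rcases lt_or_gt_of_ne (hne x hx) with h2 | h2
    · exfalso
      have hKx : K < x := by
        rcases eq_or_lt_of_le hx with h3 | h3
        · exfalso; rw [← h3] at h2; linarith
        · exact h3
      have hmem : (0:ℝ) ∈ Icc (f x - x) (f K - K) := ⟨by linarith, by linarith⟩
      obtain ⟨z, hzm, hzv⟩ := intermediate_value_Icc' hKx.le hcont.continuousOn hmem
      have hzv' : f z - z = 0 := hzv
      exact hne z hzm.1 (by linarith)
    · exact h2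

theorem down_window {f : ℝ → ℝ} (hf : SMS f) (a P : ℝ) (ha : 0 < a) :
    ∃ (Γ : ℝ → ℝ) (Q b ξ η : ℝ), SMS Γ ∧ 0 < b ∧ P < Q ∧
      ξ ∈ Ioo P Q ∧ η ∈ Ioo P Q ∧
      (∀ x, x ≤ P → Γ x = Ha f a x) ∧
      (∀ x, Q ≤ x → Γ x = Lb f b x) ∧
      Γ ξ = ξ ∧ (∀ x, x < ξ → x < Γ x) ∧ (∀ x, ξ < x → Γ x < x) ∧
      Γ η = f η ∧ (∀ x, x < η → f x < Γ x) ∧ (∀ x, η < x → Γ x < f x) := by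
  classical
  have hMS := Mf_SMS hf
  have hmS := mf_SMS hf
  set V := Ha f a P with hVdef
  have hVgt : Mf f P < V := Ha_gt hf ha P
  set c := V - Mf f P with hcdef
  have hc : 0 < c := by rw [hcdef]; linarith
  set K := V + c with hKdef
  set p₁ : ℝ → ℝ := fun x => Mf f x + c with hp₁
  have hp₁S : SMS p₁ := by
    constructor
    · intro x y hxy
      have := hMS.1 hxy
      show Mf f x + c < Mf f y + c
      linarith
    · intro y
      refine ⟨hMS.perm.symm (y - c), ?_⟩
      show Mf f (hMS.perm.symm (y - c)) + c = y
      rw [hMS.perm_symm_apply_comp]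
      ring
  have hj₀ : Ha f a P = p₁ P := by
    show V = Mf f P + c
    rw [hcdef]; ring
  have hPK : P < K := by
    have := Mf_le' f P
    rw [hKdef]
    linarith
  by_cases hz : ∃ z, K ≤ z ∧ f z = z
  · -- Case C : a fixed point beyond K
    obtain ⟨z, hzK, hzf⟩ := hz
    have hMz : Mf f z = z := by unfold Mf; rw [hzf, max_self]
    have hmz : mf f z = z := by unfold mf; rw [hzf, min_self]
    set P' := hMS.perm.symm (z - 2*c) with hP'def
    have hMP' : Mf f P' = z - 2*c := hMS.perm_symm_apply_comp _
    have hPP' : P ≤ P' := by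
      by_contra hcon
      push_neg at hcon
      have h1 := hMS.1 hcon
      rw [hMP'] at h1
      rw [hKdef] at hzK
      rw [hcdef] at h1
      linarith
    have hP'z : P' < z := by
      have h1 : Mf f P' < Mf f z := by rw [hMP', hMz]; linarith
      exact hMS.1.lt_iff_lt.mp h1
    set p₂ : ℝ → ℝ := fun x => (Mf f x + z) / 2 with hp₂
    have hp₂S : SMS p₂ := avgC_SMS hMS z
    set p₃ : ℝ → ℝ := fun x => (mf f x + z) / 2 with hp₃
    have hp₃S : SMS p₃ := avgC_SMS hmS z
    set x₅ := hmS.perm.symm (z + 2) with hx₅def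
    have hmx₅ : mf f x₅ = z + 2 := hmS.perm_symm_apply_comp _
    have hzx₅ : z < x₅ := by
      have h1 : mf f z < mf f x₅ := by rw [hmz, hmx₅]; linarith
      exact hmS.1.lt_iff_lt.mp h1
    obtain ⟨b, hb, hLbj⟩ := exists_b hf x₅ (z + 1) (by rw [hmx₅]; linarith)
    have hLS : SMS (Lb f b) := Lb_SMS hf b
    have hj₁ : p₁ P' = p₂ P' := by
      show Mf f P' + c = (Mf f P' + z) / 2
      rw [hMP']; ring
    have hj₂ : p₂ z = p₃ z := by
      show (Mf f z + z) / 2 = (mf f z + z) / 2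
      rw [hMz, hmz]
    have hj₃ : p₃ x₅ = Lb f b x₅ := by
      show (mf f x₅ + z) / 2 = Lb f b x₅
      rw [hmx₅, hLbj]; ring
    set G3 : ℝ → ℝ := glu x₅ p₃ (Lb f b) with hG3
    have hG3S : SMS G3 := glu_SMS hp₃S hLS hj₃
    set G2 : ℝ → ℝ := glu z p₂ G3 with hG2
    have hj₂' : p₂ z = G3 z := by rw [hG2] at *; rw [hG3, glu_left hzx₅.le]; exact hj₂
    have hG2S : SMS G2 := glu_SMS hp₂S hG3S hj₂'
    set G1 : ℝ → ℝ := glu P' p₁ G2 with hG1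
    have hj₁' : p₁ P' = G2 P' := by rw [hG2, glu_left (le_of_lt hP'z)]; exact hj₁
    have hG1S : SMS G1 := glu_SMS hp₁S hG2S hj₁'
    set Γ : ℝ → ℝ := glu P (Ha f a) G1 with hΓ
    have hj₀' : Ha f a P = G1 P := by rw [hG1, glu_left hPP']; exact hj₀
    have hΓS : SMS Γ := glu_SMS (Ha_SMS hf a) hG1S hj₀'
    have ev0 : ∀ x, x ≤ P → Γ x = Ha f a x := fun x hx => glu_left hx
    have ev1 : ∀ x, P ≤ x → x ≤ P' → Γ x = p₁ x := by
      intro x h1 h2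
      rw [hΓ, glu_right hj₀' h1, hG1, glu_left h2]
    have ev2 : ∀ x, P' ≤ x → x ≤ z → Γ x = p₂ x := by
      intro x h1 h2
      rw [hΓ, glu_right hj₀' (hPP'.trans h1), hG1, glu_right hj₁' h1, hG2, glu_left h2]
    have ev3 : ∀ x, z ≤ x → x ≤ x₅ → Γ x = p₃ x := by
      intro x h1 h2
      rw [hΓ, glu_right hj₀' (hPP'.trans (hP'z.le.trans h1)), hG1,
        glu_right hj₁' (hP'z.le.trans h1), hG2, glu_right hj₂' h1, hG3, glu_left h2]
    have ev4 : ∀ x, x₅ ≤ x → Γ x = Lb f b x := by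
      intro x h1
      rw [hΓ, glu_right hj₀' (hPP'.trans (hP'z.le.trans (hzx₅.le.trans h1))), hG1,
        glu_right hj₁' (hP'z.le.trans (hzx₅.le.trans h1)), hG2,
        glu_right hj₂' (hzx₅.le.trans h1), hG3, glu_right hj₃ h1]
    have hsub : ∀ x, x < z → (x < Γ x ∧ f x < Γ x) := by
      intro x hx
      rcases le_or_gt x P with h | h
      · rw [ev0 x h]
        exact ⟨Ha_gt_id hf ha x, Ha_gt_f hf ha x⟩
      rcases le_or_gt x P' with h2 | h2
      · rw [ev1 x h.le h2]
        have h3 := Mf_le' f x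
        have h4 := Mf_le f x
        constructor
        · show x < Mf f x + c
          linarith
        · show f x < Mf f x + c
          linarith
      · rw [ev2 x h2.le hx.le]
        have hMx : Mf f x < z := by
          have := hMS.1 hx
          rw [hMz] at this
          exact this
        have h3 := Mf_le' f x
        have h4 := Mf_le f x
        constructor
        · show x < (Mf f x + z) / 2
          linarith
        · show f x < (Mf f x + z) / 2
          linarith
    have hsup : ∀ x, z < x → (Γ x < x ∧ Γ x < f x) := by
      intro x hx
      rcases le_or_gt x x₅ with h | h
      · rw [ev3 x hx.le h]
        have hmx : z < mf f x := by
          have := hmS.1 hx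
          rw [hmz] at this
          exact this
        have h3 := mf_le' f x
        have h4 := mf_le f x
        constructor
        · show (mf f x + z) / 2 < x
          linarith
        · show (mf f x + z) / 2 < f x
          linarith
      · rw [ev4 x h.le]
        exact ⟨Lb_lt_id hf hb x, Lb_lt_f hf hb x⟩
    have hΓz : Γ z = z := by
      rw [ev3 z (le_refl z) hzx₅.le]
      show (mf f z + z) / 2 = z
      rw [hmz]; ring
    refine ⟨Γ, x₅, b, z, z, hΓS, hb, ?_, ?_, ?_, ev0, ev4, hΓz, ?_, ?_, ?_, ?_, ?_⟩
    · exact lt_trans (lt_of_le_of_lt hPP' hP'z) hzx₅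
    · exact ⟨lt_of_le_of_lt hPP' hP'z, hzx₅⟩
    · exact ⟨lt_of_le_of_lt hPP' hP'z, hzx₅⟩
    · exact fun x hx => (hsub x hx).1
    · exact fun x hx => (hsup x hx).1
    · rw [hΓz, hzf]
    · exact fun x hx => (hsub x hx).2
    · exact fun x hx => (hsup x hx).2
  · -- no fixed point beyond K
    rcases sign_dichotomy hf K hz with hplus | hminus
    · -- f > id on [K, ∞)
      have hMzone : ∀ x, K ≤ x → Mf f x = f x := fun x hx => max_eq_left (hplus x hx).le
      have hmzone : ∀ x, K ≤ x → mf f x = x := fun x hx => min_eq_right (hplus x hx).le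
      set K₂ := f K + 2*c with hK₂def
      have hfK : K < f K := hplus K (le_refl K)
      have hKK₂ : K < K₂ := by rw [hK₂def]; linarith
      set p₂ : ℝ → ℝ := fun x => (f x + K₂) / 2 with hp₂
      have hp₂S : SMS p₂ := avgC_SMS hf K₂
      set A : ℝ → ℝ := fun x => (f x + x) / 2 with hA
      have hAS : SMS A := avgid_SMS hf
      set η := hf.perm.symm K₂ with hηdef
      have hfη : f η = K₂ := hf.perm_symm_apply_comp _
      have hKη : K < η := by
        apply hf.1.lt_iff_lt.mp
        rw [hfη]
        rw [hK₂def]; linarith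
      have hηK₂ : η < K₂ := by
        have := hplus η hKη.le
        rw [hfη] at this
        exact this
      set e := K₂ + 1 with hedef
      have hKe : K ≤ e := by rw [hedef]; linarith
      have hK₂e : K₂ < e := by rw [hedef]; linarith
      have hefe : e < f e := hplus e hKe
      set ξ := f e with hξdef
      set x₅ := f e + 2 with hx₅def
      have hKx₅ : K ≤ x₅ := by rw [hx₅def]; linarith
      set p₄ : ℝ → ℝ := fun x => (x + f e) / 2 with hp₄
      have hp₄S : SMS p₄ := affh_SMS (f e)
      obtain ⟨b, hb, hLbj⟩ := exists_b hf x₅ (f e + 1)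
        (by rw [hmzone x₅ hKx₅, hx₅def]; linarith)
      have hLS : SMS (Lb f b) := Lb_SMS hf b
      have hj₁ : p₁ K = p₂ K := by
        show Mf f K + c = (f K + K₂) / 2
        rw [hMzone K (le_refl K), hK₂def]; ring
      have hj₂ : p₂ K₂ = A K₂ := by
        show (f K₂ + K₂) / 2 = (f K₂ + K₂) / 2
        rfl
      have hj₃ : A e = p₄ e := by
        show (f e + e) / 2 = (e + f e) / 2
        ring
      have hj₄ : p₄ x₅ = Lb f b x₅ := by
        show (x₅ + f e) / 2 = Lb f b x₅
        rw [hLbj, hx₅def]; ring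
      set G4 : ℝ → ℝ := glu x₅ p₄ (Lb f b) with hG4
      have hG4S : SMS G4 := glu_SMS hp₄S hLS hj₄
      set G3 : ℝ → ℝ := glu e A G4 with hG3
      have hex₅ : e ≤ x₅ := by rw [hedef, hx₅def]; linarith
      have hj₃' : A e = G4 e := by rw [hG4, glu_left hex₅]; exact hj₃
      have hG3S : SMS G3 := glu_SMS hAS hG4S hj₃'
      set G2 : ℝ → ℝ := glu K₂ p₂ G3 with hG2
      have hj₂' : p₂ K₂ = G3 K₂ := by rw [hG3, glu_left hK₂e.le]
      have hG2S : SMS G2 := glu_SMS hp₂S hG3S hj₂'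
      set G1 : ℝ → ℝ := glu K p₁ G2 with hG1
      have hj₁' : p₁ K = G2 K := by rw [hG2, glu_left hKK₂.le]; exact hj₁
      have hG1S : SMS G1 := glu_SMS hp₁S hG2S hj₁'
      set Γ : ℝ → ℝ := glu P (Ha f a) G1 with hΓ
      have hj₀' : Ha f a P = G1 P := by rw [hG1, glu_left hPK.le]; exact hj₀
      have hΓS : SMS Γ := glu_SMS (Ha_SMS hf a) hG1S hj₀'
      have ev0 : ∀ x, x ≤ P → Γ x = Ha f a x := fun x hx => glu_left hx
      have ev1 : ∀ x, P ≤ x → x ≤ K → Γ x = p₁ x := by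
        intro x h1 h2
        rw [hΓ, glu_right hj₀' h1, hG1, glu_left h2]
      have ev2 : ∀ x, K ≤ x → x ≤ K₂ → Γ x = p₂ x := by
        intro x h1 h2
        rw [hΓ, glu_right hj₀' (hPK.le.trans h1), hG1, glu_right hj₁' h1, hG2, glu_left h2]
      have ev3 : ∀ x, K₂ ≤ x → x ≤ e → Γ x = A x := by
        intro x h1 h2
        rw [hΓ, glu_right hj₀' (hPK.le.trans (hKK₂.le.trans h1)), hG1,
          glu_right hj₁' (hKK₂.le.trans h1), hG2, glu_right hj₂' h1, hG3, glu_left h2]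
      have ev4 : ∀ x, e ≤ x → x ≤ x₅ → Γ x = p₄ x := by
        intro x h1 h2
        rw [hΓ, glu_right hj₀' (hPK.le.trans (hKK₂.le.trans (hK₂e.le.trans h1))), hG1,
          glu_right hj₁' (hKK₂.le.trans (hK₂e.le.trans h1)), hG2,
          glu_right hj₂' (hK₂e.le.trans h1), hG3, glu_right hj₃' h1, hG4, glu_left h2]
      have ev5 : ∀ x, x₅ ≤ x → Γ x = Lb f b x := by
        intro x h1
        rw [hΓ, glu_right hj₀'
            (hPK.le.trans (hKK₂.le.trans (hK₂e.le.trans (hex₅.trans h1)))), hG1,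
          glu_right hj₁' (hKK₂.le.trans (hK₂e.le.trans (hex₅.trans h1))), hG2,
          glu_right hj₂' (hK₂e.le.trans (hex₅.trans h1)), hG3,
          glu_right hj₃' (hex₅.trans h1), hG4, glu_right hj₄ h1]
      -- orderings
      have hηe : η < e := lt_trans hηK₂ hK₂e
      have heξ : e < ξ := hefe
      have hξx₅ : ξ < x₅ := by rw [hξdef, hx₅def]; linarith
      have hPη : P < η := lt_trans hPK hKη
      have hPξ : P < ξ := lt_trans hPη (lt_trans hηe heξ)
      -- id signs
      have hid1 : ∀ x, x < ξ → x < Γ x := by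
        intro x hx
        rcases le_or_gt x P with h | h
        · rw [ev0 x h]; exact Ha_gt_id hf ha x
        rcases le_or_gt x K with h2 | h2
        · rw [ev1 x h.le h2]
          have := Mf_le' f x
          show x < Mf f x + c
          linarith
        rcases le_or_gt x K₂ with h3 | h3
        · rw [ev2 x h2.le h3]
          have h4 := hplus x h2.le
          show x < (f x + K₂) / 2
          linarith
        rcases le_or_gt x e with h4 | h4
        · rw [ev3 x h3.le h4]
          have h5 := hplus x (hKK₂.le.trans h3.le)
          show x < (f x + x) / 2
          linarith
        · rw [ev4 x h4.le (by rw [hx₅def]; rw [hξdef] at hx; linarith)]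
          show x < (x + f e) / 2
          rw [hξdef] at hx
          linarith
      have hid2 : ∀ x, ξ < x → Γ x < x := by
        intro x hx
        rcases le_or_gt x x₅ with h | h
        · rw [ev4 x (by rw [hξdef] at hx; linarith) h]
          show (x + f e) / 2 < x
          rw [hξdef] at hx
          linarith
        · rw [ev5 x h.le]
          exact Lb_lt_id hf hb x
      -- f signs
      have hfs1 : ∀ x, x < η → f x < Γ x := by
        intro x hx
        rcases le_or_gt x P with h | h
        · rw [ev0 x h]; exact Ha_gt_f hf ha x
        rcases le_or_gt x K with h2 | h2
        · rw [ev1 x h.le h2]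
          have := Mf_le f x
          show f x < Mf f x + c
          linarith
        · rw [ev2 x h2.le (le_of_lt (lt_trans hx hηK₂))]
          have h4 : f x < K₂ := by
            rw [← hfη]
            exact hf.1 hx
          show f x < (f x + K₂) / 2
          linarith
      have hfs2 : ∀ x, η < x → Γ x < f x := by
        intro x hx
        have hfx : K₂ < f x := by
          rw [← hfη]
          exact hf.1 hx
        rcases le_or_gt x K₂ with h | h
        · rw [ev2 x (le_of_lt (lt_trans hKη hx)) h]
          show (f x + K₂) / 2 < f x
          linarith
        rcases le_or_gt x e with h2 | h2
        · rw [ev3 x h.le h2]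
          have h5 := hplus x (hKK₂.le.trans h.le)
          show (f x + x) / 2 < f x
          linarith
        rcases le_or_gt x x₅ with h3 | h3
        · rw [ev4 x h2.le h3]
          have h5 := hplus x (hKe.trans h2.le)
          have h6 : f e ≤ f x := hf.1.monotone h2.le
          show (x + f e) / 2 < f x
          linarith
        · rw [ev5 x h3.le]
          exact Lb_lt_f hf hb x
      have hΓξ : Γ ξ = ξ := by
        rw [ev4 ξ heξ.le hξx₅.le]
        show (ξ + f e) / 2 = ξ
        rw [hξdef]; ring
      have hΓη : Γ η = f η := by
        rw [ev2 η hKη.le hηK₂.le]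
        show (f η + K₂) / 2 = f η
        rw [hfη]; ring
      refine ⟨Γ, x₅, b, ξ, η, hΓS, hb, ?_, ?_, ?_, ev0, ev5, hΓξ, hid1, hid2, hΓη, hfs1, hfs2⟩
      · exact lt_trans hPξ hξx₅
      · exact ⟨hPξ, hξx₅⟩
      · exact ⟨hPη, lt_trans (lt_trans hηe heξ) hξx₅⟩
    · -- f < id on [K, ∞)
      have hMzone : ∀ x, K ≤ x → Mf f x = x := fun x hx => max_eq_right (hminus x hx).le
      have hmzone : ∀ x, K ≤ x → mf f x = f x := fun x hx => min_eq_left (hminus x hx).le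
      set K₂ := K + 2*c with hK₂def
      have hKK₂ : K < K₂ := by rw [hK₂def]; linarith
      set p₂ : ℝ → ℝ := fun x => (x + K₂) / 2 with hp₂
      have hp₂S : SMS p₂ := affh_SMS K₂
      set A : ℝ → ℝ := fun x => (f x + x) / 2 with hA
      have hAS : SMS A := avgid_SMS hf
      set r := hf.perm.symm K₂ with hrdef
      have hfr : f r = K₂ := hf.perm_symm_apply_comp _
      have hKr : K < r := by
        by_contra hcon
        push_neg at hcon
        have h1 : f r ≤ f K := hf.1.monotone hcon
        have h2 := hminus K (le_refl K)
        rw [hfr] at h1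
        linarith
      have hK₂r : K₂ < r := by
        have := hminus r hKr.le
        rw [hfr] at this
        exact this
      set e := r + 1 with hedef
      have hre : r < e := by rw [hedef]; linarith
      have hKe : K ≤ e := by linarith
      set p₄ : ℝ → ℝ := fun x => (f x + e) / 2 with hp₄
      have hp₄S : SMS p₄ := avgC_SMS hf e
      set η := hf.perm.symm e with hηdef
      have hfη : f η = e := hf.perm_symm_apply_comp _
      have hKη : K < η := by
        by_contra hcon
        push_neg at hcon
        have h1 : f η ≤ f K := hf.1.monotone hcon
        have h2 := hminus K (le_refl K)
        rw [hfη] at h1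
        linarith
      have heη : e < η := by
        have := hminus η hKη.le
        rw [hfη] at this
        exact this
      set x₅ := η + 2 with hx₅def
      have hηx₅ : η < x₅ := by rw [hx₅def]; linarith
      have hKx₅ : K ≤ x₅ := by linarith
      have hfx₅gt : e < f x₅ := by
        rw [← hfη]
        exact hf.1 hηx₅
      obtain ⟨b, hb, hLbj⟩ := exists_b hf x₅ ((f x₅ + e) / 2)
        (by rw [hmzone x₅ hKx₅]; linarith)
      have hLS : SMS (Lb f b) := Lb_SMS hf b
      have hj₁ : p₁ K = p₂ K := by
        show Mf f K + c = (K + K₂) / 2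
        rw [hMzone K (le_refl K), hK₂def]; ring
      have hj₂ : p₂ r = A r := by
        show (r + K₂) / 2 = (f r + r) / 2
        rw [hfr]; ring
      have hj₃ : A e = p₄ e := by
        show (f e + e) / 2 = (f e + e) / 2
        rfl
      have hj₄ : p₄ x₅ = Lb f b x₅ := by
        show (f x₅ + e) / 2 = Lb f b x₅
        rw [hLbj]
      set G4 : ℝ → ℝ := glu x₅ p₄ (Lb f b) with hG4
      have hG4S : SMS G4 := glu_SMS hp₄S hLS hj₄
      set G3 : ℝ → ℝ := glu e A G4 with hG3
      have hex₅ : e ≤ x₅ := by linarith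
      have hj₃' : A e = G4 e := by rw [hG4, glu_left hex₅]
      have hG3S : SMS G3 := glu_SMS hAS hG4S hj₃'
      set G2 : ℝ → ℝ := glu r p₂ G3 with hG2
      have hj₂' : p₂ r = G3 r := by rw [hG3, glu_left hre.le]; exact hj₂
      have hG2S : SMS G2 := glu_SMS hp₂S hG3S hj₂'
      set G1 : ℝ → ℝ := glu K p₁ G2 with hG1
      have hj₁' : p₁ K = G2 K := by rw [hG2, glu_left (hKK₂.trans hK₂r).le]; exact hj₁
      have hG1S : SMS G1 := glu_SMS hp₁S hG2S hj₁'
      set Γ : ℝ → ℝ := glu P (Ha f a) G1 with hΓ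
      have hj₀' : Ha f a P = G1 P := by rw [hG1, glu_left hPK.le]; exact hj₀
      have hΓS : SMS Γ := glu_SMS (Ha_SMS hf a) hG1S hj₀'
      have ev0 : ∀ x, x ≤ P → Γ x = Ha f a x := fun x hx => glu_left hx
      have ev1 : ∀ x, P ≤ x → x ≤ K → Γ x = p₁ x := by
        intro x h1 h2
        rw [hΓ, glu_right hj₀' h1, hG1, glu_left h2]
      have ev2 : ∀ x, K ≤ x → x ≤ r → Γ x = p₂ x := by
        intro x h1 h2
        rw [hΓ, glu_right hj₀' (hPK.le.trans h1), hG1, glu_right hj₁' h1, hG2, glu_left h2]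
      have ev3 : ∀ x, r ≤ x → x ≤ e → Γ x = A x := by
        intro x h1 h2
        rw [hΓ, glu_right hj₀' (hPK.le.trans (hKr.le.trans h1)), hG1,
          glu_right hj₁' (hKr.le.trans h1), hG2, glu_right hj₂' h1, hG3, glu_left h2]
      have ev4 : ∀ x, e ≤ x → x ≤ x₅ → Γ x = p₄ x := by
        intro x h1 h2
        rw [hΓ, glu_right hj₀' (hPK.le.trans (hKr.le.trans (hre.le.trans h1))), hG1,
          glu_right hj₁' (hKr.le.trans (hre.le.trans h1)), hG2,
          glu_right hj₂' (hre.le.trans h1), hG3, glu_right hj₃' h1, hG4, glu_left h2]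
      have ev5 : ∀ x, x₅ ≤ x → Γ x = Lb f b x := by
        intro x h1
        rw [hΓ, glu_right hj₀'
            (hPK.le.trans (hKr.le.trans (hre.le.trans (hex₅.trans h1)))), hG1,
          glu_right hj₁' (hKr.le.trans (hre.le.trans (hex₅.trans h1))), hG2,
          glu_right hj₂' (hre.le.trans (hex₅.trans h1)), hG3,
          glu_right hj₃' (hex₅.trans h1), hG4, glu_right hj₄ h1]
      have hPK₂ : P < K₂ := lt_trans hPK hKK₂
      have hK₂x₅ : K₂ < x₅ := lt_trans hK₂r (lt_trans hre (lt_trans heη hηx₅))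
      have hPη : P < η := lt_trans hPK hKη
      have hid1 : ∀ x, x < K₂ → x < Γ x := by
        intro x hx
        rcases le_or_gt x P with h | h
        · rw [ev0 x h]; exact Ha_gt_id hf ha x
        rcases le_or_gt x K with h2 | h2
        · rw [ev1 x h.le h2]
          have := Mf_le' f x
          show x < Mf f x + c
          linarith
        · rw [ev2 x h2.le (by linarith)]
          show x < (x + K₂) / 2
          linarith
      have hid2 : ∀ x, K₂ < x → Γ x < x := by
        intro x hx
        rcases le_or_gt x r with h | h
        · rw [ev2 x (hKK₂.le.trans hx.le) h]
          show (x + K₂) / 2 < x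
          linarith
        rcases le_or_gt x e with h2 | h2
        · rw [ev3 x h.le h2]
          have h3 := hminus x (hKr.le.trans h.le)
          show (f x + x) / 2 < x
          linarith
        rcases le_or_gt x x₅ with h3 | h3
        · rw [ev4 x h2.le h3]
          have h4 := hminus x (hKe.trans h2.le)
          have h5 : e ≤ x := h2.le
          show (f x + e) / 2 < x
          linarith
        · rw [ev5 x h3.le]
          exact Lb_lt_id hf hb x
      have hfs1 : ∀ x, x < η → f x < Γ x := by
        intro x hx
        rcases le_or_gt x P with h | h
        · rw [ev0 x h]; exact Ha_gt_f hf ha x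
        rcases le_or_gt x K with h2 | h2
        · rw [ev1 x h.le h2]
          have := Mf_le f x
          show f x < Mf f x + c
          linarith
        rcases le_or_gt x r with h3 | h3
        · rw [ev2 x h2.le h3]
          have h4 : f x ≤ f r := hf.1.monotone h3
          have h5 := hminus x h2.le
          rw [hfr] at h4
          show f x < (x + K₂) / 2
          linarith
        rcases le_or_gt x e with h4 | h4
        · rw [ev3 x h3.le h4]
          have h5 := hminus x (hKr.le.trans h3.le)
          show f x < (f x + x) / 2
          linarith
        · rw [ev4 x h4.le (by linarith)]
          have h6 : f x < e := by
            rw [← hfη]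
            exact hf.1 hx
          show f x < (f x + e) / 2
          linarith
      have hfs2 : ∀ x, η < x → Γ x < f x := by
        intro x hx
        have h6 : e < f x := by
          rw [← hfη]
          exact hf.1 hx
        rcases le_or_gt x x₅ with h | h
        · rw [ev4 x (by linarith) h]
          show (f x + e) / 2 < f x
          linarith
        · rw [ev5 x h.le]
          exact Lb_lt_f hf hb x
      have hΓK₂ : Γ K₂ = K₂ := by
        rw [ev2 K₂ hKK₂.le (by linarith)]
        show (K₂ + K₂) / 2 = K₂
        ring
      have hΓη : Γ η = f η := by
        rw [ev4 η heη.le hηx₅.le]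
        show (f η + e) / 2 = f η
        rw [hfη]; ring
      refine ⟨Γ, x₅, b, K₂, η, hΓS, hb, ?_, ?_, ?_, ev0, ev5, hΓK₂, hid1, hid2, hΓη, hfs1, hfs2⟩
      · exact lt_trans hPK₂ hK₂x₅
      · exact ⟨hPK₂, hK₂x₅⟩
      · exact ⟨hPη, hηx₅⟩

theorem up_window {f : ℝ → ℝ} (hf : SMS f) (b P : ℝ) (hb : 0 < b) :
    ∃ (Γ : ℝ → ℝ) (Q a ξ η : ℝ), SMS Γ ∧ 0 < a ∧ P < Q ∧
      ξ ∈ Ioo P Q ∧ η ∈ Ioo P Q ∧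
      (∀ x, x ≤ P → Γ x = Lb f b x) ∧
      (∀ x, Q ≤ x → Γ x = Ha f a x) ∧
      Γ ξ = ξ ∧ (∀ x, x < ξ → Γ x < x) ∧ (∀ x, ξ < x → x < Γ x) ∧
      Γ η = f η ∧ (∀ x, x < η → Γ x < f x) ∧ (∀ x, η < x → f x < Γ x) := by
  set fi : ℝ → ℝ := ⇑hf.perm.symm with hfidef
  have hfiS : SMS fi := hf.symm
  have hfil : ∀ x, fi (f x) = x := fun x => hf.perm_symm_comp_apply x
  have hfir : ∀ x, f (fi x) = x := fun x => hf.perm_symm_apply_comp x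
  obtain ⟨Γh, Qh, bh, ξh, ηh, hΓhS, hbh, hPQh, hξh, hηh, htl, htr, hΓξh, hs1, hs2,
    hΓηh, hs3, hs4⟩ := down_window hfiS b P hb
  set Γ : ℝ → ℝ := ⇑hΓhS.perm.symm with hΓdef
  have hΓS : SMS Γ := hΓhS.symm
  have hΓl : ∀ x, Γ (Γh x) = x := fun x => hΓhS.perm_symm_comp_apply x
  have hΓr : ∀ x, Γh (Γ x) = x := fun x => hΓhS.perm_symm_apply_comp x
  set Q := Γh Qh with hQdef
  set η := fi ηh with hηdef
  have hfη : f η = ηh := hfir ηh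
  have hPQ : P < Q := by
    have h1 : P < Γh P := by
      rw [htl P (le_refl P)]
      exact Ha_gt_id hfiS hb P
    have h2 : Γh P < Γh Qh := hΓhS.1 hPQh
    rw [hQdef]
    linarith
  -- left tail
  have hlt : ∀ x, x ≤ Γh P → Γ x = Lb f b x := by
    intro x hx
    have hkey : Ha fi b (Lb f b x) = x := Ha_inv_Lb hf b x
    have hmem : Lb f b x ≤ P := by
      by_contra hcon
      push_neg at hcon
      have := (Ha_SMS hfiS b).1 hcon
      rw [hkey] at this
      rw [htl P (le_refl P)] at hx
      linarith
    have h2 : Γh (Lb f b x) = x := by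
      rw [htl _ hmem]
      exact hkey
    have := congrArg Γ h2
    rw [hΓl] at this
    exact this.symm
  have hlt' : ∀ x, x ≤ P → Γ x = Lb f b x := by
    intro x hx
    apply hlt
    have h1 : P < Γh P := by
      rw [htl P (le_refl P)]
      exact Ha_gt_id hfiS hb P
    linarith
  -- right tail
  have hrt : ∀ x, Q ≤ x → Γ x = Ha f bh x := by
    intro x hx
    have hkey : Lb fi bh (Ha f bh x) = x := Lb_inv_Ha hf bh x
    have hmem : Qh ≤ Ha f bh x := by
      by_contra hcon
      push_neg at hcon
      have := (Lb_SMS hfiS bh).1 hcon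
      rw [hkey] at this
      rw [hQdef] at hx
      rw [htr Qh (le_refl Qh)] at hx
      linarith
    have h2 : Γh (Ha f bh x) = x := by
      rw [htr _ hmem]
      exact hkey
    have := congrArg Γ h2
    rw [hΓl] at this
    exact this.symm
  have hΓξ : Γ ξh = ξh := by
    have := congrArg Γ hΓξh
    rw [hΓl] at this
    exact this.symm
  have hΓη : Γ η = f η := by
    rw [hfη, hηdef]
    have := congrArg Γ hΓηh
    rw [hΓl] at this
    exact this.symm
  have hidlt : ∀ x, x < ξh → Γ x < x := by
    intro x hx
    have h1 : x < Γh x := hs1 x hx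
    have h2 : Γ x < Γ (Γh x) := hΓS.1 h1
    rw [hΓl] at h2
    exact h2
  have hidgt : ∀ x, ξh < x → x < Γ x := by
    intro x hx
    have h1 : Γh x < x := hs2 x hx
    have h2 : Γ (Γh x) < Γ x := hΓS.1 h1
    rw [hΓl] at h2
    exact h2
  have hflt : ∀ x, x < η → Γ x < f x := by
    intro x hx
    have h0 : f x < ηh := by
      have := hf.1 hx
      rw [hfη] at this
      exact this
    have h1 : fi (f x) < Γh (f x) := hs3 (f x) h0
    rw [hfil] at h1
    have h2 : Γ x < Γ (Γh (f x)) := hΓS.1 h1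
    rw [hΓl] at h2
    exact h2
  have hfgt : ∀ x, η < x → f x < Γ x := by
    intro x hx
    have h0 : ηh < f x := by
      have := hf.1 hx
      rw [hfη] at this
      exact this
    have h1 : Γh (f x) < fi (f x) := hs4 (f x) h0
    rw [hfil] at h1
    have h2 : Γ (Γh (f x)) < Γ x := hΓS.1 h1
    rw [hΓl] at h2
    exact h2
  have hξmem : ξh ∈ Ioo P Q := by
    constructor
    · exact hξh.1
    · have : Γh ξh < Γh Qh := hΓhS.1 hξh.2
      rw [hΓξh] at this
      rw [hQdef]
      exact this
  have hηmem : η ∈ Ioo P Q := by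
    constructor
    · by_contra hcon
      push_neg at hcon
      have h1 := hlt' η hcon
      rw [hΓη] at h1
      have := Lb_lt_f hf hb η
      rw [← h1] at this
      exact lt_irrefl _ this
    · by_contra hcon
      push_neg at hcon
      have h1 := hrt η hcon
      rw [hΓη] at h1
      have := Ha_gt_f hf hbh η
      rw [← h1] at this
      exact lt_irrefl _ this
  exact ⟨Γ, Q, bh, ξh, η, hΓS, hbh, hPQ, hξmem, hηmem, hlt', hrt, hΓξ, hidlt, hidgt,
    hΓη, hflt, hfgt⟩

def tailF (f : ℝ → ℝ) (dir : Bool) (a : ℝ) : ℝ → ℝ := if dir then Ha f a else Lb f a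

theorem tailF_SMS {f : ℝ → ℝ} (hf : SMS f) (dir : Bool) (a : ℝ) : SMS (tailF f dir a) := by
  cases dir
  · exact Lb_SMS hf a
  · exact Ha_SMS hf a

theorem window_step {f : ℝ → ℝ} (hf : SMS f) (dir : Bool) (P a : ℝ) (ha : 0 < a) :
    ∃ (Γ : ℝ → ℝ) (Q b ξ η : ℝ), SMS Γ ∧ 0 < b ∧ P + 1 ≤ Q ∧
      ξ ∈ Ioo P Q ∧ η ∈ Ioo P Q ∧
      (∀ x, x ≤ P → Γ x = tailF f dir a x) ∧
      (∀ x, Q ≤ x → Γ x = tailF f (!dir) b x) ∧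
      Γ ξ = ξ ∧
      (∀ x, x < ξ → if dir then x < Γ x else Γ x < x) ∧
      (∀ x, ξ < x → if dir then Γ x < x else x < Γ x) ∧
      Γ η = f η ∧
      (∀ x, x < η → if dir then f x < Γ x else Γ x < f x) ∧
      (∀ x, η < x → if dir then Γ x < f x else f x < Γ x) := by
  cases dir
  · -- up window
    obtain ⟨Γ, Q0, b, ξ, η, hS, hb, hPQ, hξ, hη, htl, htr, hΓξ, h1, h2, hΓη, h3, h4⟩ :=
      up_window hf a P ha
    refine ⟨Γ, max Q0 (P + 1), b, ξ, η, hS, hb, le_max_right _ _,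
      ⟨hξ.1, lt_of_lt_of_le hξ.2 (le_max_left _ _)⟩,
      ⟨hη.1, lt_of_lt_of_le hη.2 (le_max_left _ _)⟩,
      ?_, ?_, hΓξ, ?_, ?_, hΓη, ?_, ?_⟩
    · intro x hx
      rw [htl x hx]
      rfl
    · intro x hx
      rw [htr x (le_trans (le_max_left _ _) hx)]
      rfl
    · intro x hx; simpa using h1 x hx
    · intro x hx; simpa using h2 x hx
    · intro x hx; simpa using h3 x hx
    · intro x hx; simpa using h4 x hx
  · -- down window
    obtain ⟨Γ, Q0, b, ξ, η, hS, hb, hPQ, hξ, hη, htl, htr, hΓξ, h1, h2, hΓη, h3, h4⟩ :=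
      down_window hf a P ha
    refine ⟨Γ, max Q0 (P + 1), b, ξ, η, hS, hb, le_max_right _ _,
      ⟨hξ.1, lt_of_lt_of_le hξ.2 (le_max_left _ _)⟩,
      ⟨hη.1, lt_of_lt_of_le hη.2 (le_max_left _ _)⟩,
      ?_, ?_, hΓξ, ?_, ?_, hΓη, ?_, ?_⟩
    · intro x hx
      rw [htl x hx]
      rfl
    · intro x hx
      rw [htr x (le_trans (le_max_left _ _) hx)]
      rfl
    · intro x hx; simpa using h1 x hx
    · intro x hx; simpa using h2 x hx
    · intro x hx; simpa using h3 x hx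
    · intro x hx; simpa using h4 x hx

/-- direction of window `n` -/
def dirn (dir0 : Bool) (n : ℕ) : Bool := if Even n then dir0 else !dir0

theorem dirn_succ (dir0 : Bool) (n : ℕ) : dirn dir0 (n + 1) = !(dirn dir0 n) := by
  unfold dirn
  by_cases h : Even n
  · rw [if_pos h, if_neg (by simp [Nat.even_add_one, h])]
  · rw [if_neg h, if_pos (Nat.even_add_one.mpr h), Bool.not_not]

/-- a one-sided chain of windows -/
theorem chain_exists {f : ℝ → ℝ} (hf : SMS f) (dir0 : Bool) :
    ∃ (P par : ℕ → ℝ) (Γ : ℕ → ℝ → ℝ) (ξ η : ℕ → ℝ),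
      P 0 = 0 ∧ par 0 = 1 ∧
      (∀ n, 0 < par n) ∧ (∀ n, P n + 1 ≤ P (n + 1)) ∧
      (∀ n, SMS (Γ n)) ∧
      (∀ n, ξ n ∈ Ioo (P n) (P (n + 1))) ∧ (∀ n, η n ∈ Ioo (P n) (P (n + 1))) ∧
      (∀ n, ∀ x, x ≤ P n → Γ n x = tailF f (dirn dir0 n) (par n) x) ∧
      (∀ n, ∀ x, P (n + 1) ≤ x → Γ n x = tailF f (dirn dir0 (n + 1)) (par (n + 1)) x) ∧
      (∀ n, Γ n (ξ n) = ξ n) ∧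
      (∀ n, ∀ x, x < ξ n → if dirn dir0 n then x < Γ n x else Γ n x < x) ∧
      (∀ n, ∀ x, ξ n < x → if dirn dir0 n then Γ n x < x else x < Γ n x) ∧
      (∀ n, Γ n (η n) = f (η n)) ∧
      (∀ n, ∀ x, x < η n → if dirn dir0 n then f x < Γ n x else Γ n x < f x) ∧
      (∀ n, ∀ x, η n < x → if dirn dir0 n then Γ n x < f x else f x < Γ n x) := by
  classical
  -- the state recursion
  let Step : ℕ → {q : ℝ × ℝ // 0 < q.2} → {q : ℝ × ℝ // 0 < q.2} := fun n s =>
    ⟨((window_step hf (dirn dir0 n) s.1.1 s.1.2 s.2).choose_spec.choose,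
      (window_step hf (dirn dir0 n) s.1.1 s.1.2 s.2).choose_spec.choose_spec.choose),
      (window_step hf (dirn dir0 n) s.1.1 s.1.2
        s.2).choose_spec.choose_spec.choose_spec.choose_spec.choose_spec.2.1⟩
  let st : ℕ → {q : ℝ × ℝ // 0 < q.2} := fun n => Nat.rec ⟨(0, 1), one_pos⟩ Step n
  have hst : ∀ n, st (n + 1) = Step n (st n) := fun n => rfl
  set P : ℕ → ℝ := fun n => (st n).1.1 with hP
  set par : ℕ → ℝ := fun n => (st n).1.2 with hpar
  set Γ : ℕ → ℝ → ℝ := fun n =>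
    (window_step hf (dirn dir0 n) (P n) (par n) (st n).2).choose with hΓ
  set ξ : ℕ → ℝ := fun n =>
    (window_step hf (dirn dir0 n) (P n) (par n)
      (st n).2).choose_spec.choose_spec.choose_spec.choose with hξ
  set η : ℕ → ℝ := fun n =>
    (window_step hf (dirn dir0 n) (P n) (par n)
      (st n).2).choose_spec.choose_spec.choose_spec.choose_spec.choose with hη
  have hspec : ∀ n,
      SMS (Γ n) ∧ 0 < par (n + 1) ∧ P n + 1 ≤ P (n + 1) ∧
      ξ n ∈ Ioo (P n) (P (n + 1)) ∧ η n ∈ Ioo (P n) (P (n + 1)) ∧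
      (∀ x, x ≤ P n → Γ n x = tailF f (dirn dir0 n) (par n) x) ∧
      (∀ x, P (n + 1) ≤ x → Γ n x = tailF f (!(dirn dir0 n)) (par (n + 1)) x) ∧
      Γ n (ξ n) = ξ n ∧
      (∀ x, x < ξ n → if dirn dir0 n then x < Γ n x else Γ n x < x) ∧
      (∀ x, ξ n < x → if dirn dir0 n then Γ n x < x else x < Γ n x) ∧
      Γ n (η n) = f (η n) ∧
      (∀ x, x < η n → if dirn dir0 n then f x < Γ n x else Γ n x < f x) ∧
      (∀ x, η n < x → if dirn dir0 n then Γ n x < f x else f x < Γ n x) := by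
    intro n
    have hQ : P (n + 1) =
        (window_step hf (dirn dir0 n) (P n) (par n) (st n).2).choose_spec.choose := rfl
    have hb : par (n + 1) =
        (window_step hf (dirn dir0 n) (P n) (par n)
          (st n).2).choose_spec.choose_spec.choose := rfl
    obtain hw := (window_step hf (dirn dir0 n) (P n) (par n)
      (st n).2).choose_spec.choose_spec.choose_spec.choose_spec.choose_spec
    rw [hQ, hb]
    exact ⟨hw.1, hw.2.1, hw.2.2.1, hw.2.2.2.1, hw.2.2.2.2.1, hw.2.2.2.2.2.1,
      hw.2.2.2.2.2.2.1, hw.2.2.2.2.2.2.2.1, hw.2.2.2.2.2.2.2.2.1,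
      hw.2.2.2.2.2.2.2.2.2.1, hw.2.2.2.2.2.2.2.2.2.2.1,
      hw.2.2.2.2.2.2.2.2.2.2.2.1, hw.2.2.2.2.2.2.2.2.2.2.2.2⟩
  have hpar0 : par 0 = 1 := rfl
  have hparpos : ∀ n, 0 < par n := by
    intro n
    cases n with
    | zero => rw [hpar0]; exact one_pos
    | succ m => exact (hspec m).2.1
  refine ⟨P, par, Γ, ξ, η, rfl, hpar0, hparpos, fun n => (hspec n).2.2.1,
    fun n => (hspec n).1, fun n => (hspec n).2.2.2.1, fun n => (hspec n).2.2.2.2.1,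
    fun n => (hspec n).2.2.2.2.2.1, ?_, fun n => (hspec n).2.2.2.2.2.2.2.1,
    fun n => (hspec n).2.2.2.2.2.2.2.2.1, fun n => (hspec n).2.2.2.2.2.2.2.2.2.1,
    fun n => (hspec n).2.2.2.2.2.2.2.2.2.2.1, fun n => (hspec n).2.2.2.2.2.2.2.2.2.2.2.1,
    fun n => (hspec n).2.2.2.2.2.2.2.2.2.2.2.2⟩
  intro n x hx
  rw [dirn_succ]
  exact (hspec n).2.2.2.2.2.2.1 x hx

def reflF (φ : ℝ → ℝ) : ℝ → ℝ := fun x => -φ (-x)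

theorem reflF_SMS {φ : ℝ → ℝ} (h : SMS φ) : SMS (reflF φ) := by
  constructor
  · intro x y hxy
    have := h.1 (show -y < -x by linarith)
    unfold reflF
    linarith
  · intro y
    obtain ⟨w, hw⟩ := h.2 (-y)
    exact ⟨-w, by unfold reflF; rw [neg_neg, hw]; ring⟩

theorem reflF_Lb (f : ℝ → ℝ) (a x : ℝ) : reflF (Lb (reflF f) a) x = Ha f a x := by
  unfold reflF Lb Ha mf Mf
  beta_reduce
  rw [show (-(-x - a)) = x + a by ring]
  rw [show (-x - a : ℝ) = -(x + a) by ring]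
  rw [min_neg_neg]
  ring

theorem reflF_Ha (f : ℝ → ℝ) (a x : ℝ) : reflF (Ha (reflF f) a) x = Lb f a x := by
  unfold reflF Lb Ha mf Mf
  beta_reduce
  rw [show (-(-x + a)) = x - a by ring]
  rw [show (-x + a : ℝ) = -(x - a) by ring]
  rw [max_neg_neg]
  ring

theorem reflF_tailF (f : ℝ → ℝ) (dir : Bool) (a x : ℝ) :
    reflF (tailF (reflF f) dir a) x = tailF f (!dir) a x := by
  cases dir
  · unfold tailF
    simp only [Bool.not_false, if_neg Bool.false_ne_true, if_pos rfl]
    exact reflF_Lb f a x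
  · unfold tailF
    simp only [Bool.not_true, if_pos rfl, if_neg Bool.false_ne_true]
    exact reflF_Ha f a x

theorem SMS.blockIco {Γ : ℝ → ℝ} (h : SMS Γ) (u v : ℝ) :
    StrictMonoOn Γ (Ico u v) ∧ MapsTo Γ (Ico u v) (Ico (Γ u) (Γ v)) ∧
    SurjOn Γ (Ico u v) (Ico (Γ u) (Γ v)) := by
  refine ⟨h.1.strictMonoOn _, fun x hx => ⟨h.1.monotone hx.1, h.1 hx.2⟩, ?_⟩
  intro y hy
  obtain ⟨x, hx⟩ := h.2 y
  refine ⟨x, ⟨?_, ?_⟩, hx⟩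
  · by_contra hc
    push_neg at hc
    have := h.1 hc
    rw [hx] at this
    exact absurd hy.1 (not_le.mpr this)
  · by_contra hc
    push_neg at hc
    have : Γ v ≤ Γ x := h.1.monotone hc
    rw [hx] at this
    exact absurd hy.2 (not_lt.mpr this)

theorem crossing_construction {f : ℝ → ℝ} (hf : SMS f) :
    ∃ (G : ℝ → ℝ) (ξ η : ℤ → ℝ), SMS G ∧
      StrictMono ξ ∧ Tendsto ξ atTop atTop ∧ Tendsto ξ atBot atBot ∧
      StrictMono η ∧ Tendsto η atTop atTop ∧ Tendsto η atBot atBot ∧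
      (∀ n, G (ξ n) = ξ n) ∧ (∀ n, G (η n) = f (η n)) ∧
      (∀ n : ℤ, Even n → ∀ x ∈ Ioo (ξ n) (ξ (n + 1)), G x < x) ∧
      (∀ n : ℤ, ¬Even n → ∀ x ∈ Ioo (ξ n) (ξ (n + 1)), x < G x) ∧
      (∀ n : ℤ, Even n → ∀ x ∈ Ioo (η n) (η (n + 1)), G x < f x) ∧
      (∀ n : ℤ, ¬Even n → ∀ x ∈ Ioo (η n) (η (n + 1)), f x < G x) := by
  classical
  set fc : ℝ → ℝ := reflF f with hfcdef
  have hfcS : SMS fc := reflF_SMS hf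
  have hfcval : ∀ x, fc (-x) = -f x := by
    intro x
    show -f (-(-x)) = -f x
    rw [neg_neg]
  obtain ⟨P1, par1, Γ1, ξ1, η1, hP10, hpar10, hparpos1, hPstep1, hΓS1, hξmem1, hηmem1,
    htl1, htr1, hΓξ1, hsa1, hsb1, hΓη1, hsc1, hsd1⟩ := chain_exists hf true
  obtain ⟨P2, par2, Γ2, ξ2, η2, hP20, hpar20, hparpos2, hPstep2, hΓS2, hξmem2, hηmem2,
    htl2, htr2, hΓξ2, hsa2, hsb2, hΓη2, hsc2, hsd2⟩ := chain_exists hfcS false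
  have hP1mono : StrictMono P1 := strictMono_nat_of_lt_succ (fun n => by linarith [hPstep1 n])
  have hP2mono : StrictMono P2 := strictMono_nat_of_lt_succ (fun n => by linarith [hPstep2 n])
  have hP1ge : ∀ n : ℕ, (n : ℝ) ≤ P1 n := by
    intro n
    induction n with
    | zero => rw [hP10]; simp
    | succ m ih =>
        have := hPstep1 m
        push_cast
        linarith
  have hP2ge : ∀ n : ℕ, (n : ℝ) ≤ P2 n := by
    intro n
    induction n with
    | zero => rw [hP20]; simp
    | succ m ih =>
        have := hPstep2 m
        push_cast
        linarith
  -- parity helpers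
  have hd1t : ∀ k : ℕ, Even k → dirn true k = true := by
    intro k hk; unfold dirn; rw [if_pos hk]
  have hd1f : ∀ k : ℕ, ¬Even k → dirn true k = false := by
    intro k hk; unfold dirn; rw [if_neg hk]; rfl
  have hd2f : ∀ k : ℕ, Even k → dirn false k = false := by
    intro k hk; unfold dirn; rw [if_pos hk]
  have hd2t : ∀ k : ℕ, ¬Even k → dirn false k = true := by
    intro k hk; unfold dirn; rw [if_neg hk]; rfl
  have hparneg : ∀ k : ℕ, Even (Int.negSucc k) ↔ ¬ Even k := by
    intro k
    rw [Int.negSucc_eq, even_neg, Int.even_add_one, Int.even_coe_nat]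
  have hparof : ∀ k : ℕ, Even (Int.ofNat k) ↔ Even k := by
    intro k
    exact Int.even_coe_nat k
  -- successor shapes
  have hsuccof : ∀ k : ℕ, (Int.ofNat k) + 1 = Int.ofNat (k + 1) := by
    intro k; rfl
  have hsuccneg : ∀ k : ℕ, (Int.negSucc (k + 1)) + 1 = Int.negSucc k := by
    intro k
    rw [Int.negSucc_eq, Int.negSucc_eq]
    push_cast
    ring
  have hsuccneg0 : (Int.negSucc 0) + 1 = Int.ofNat 0 := by decide
  -- the global data
  set W : ℤ → ℝ := fun n => match n with
    | .ofNat k => P1 k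
    | .negSucc k => -(P2 (k + 1)) with hW
  set FB : ℤ → ℝ → ℝ := fun n => match n with
    | .ofNat k => Γ1 k
    | .negSucc k => reflF (Γ2 k) with hFB
  set ξZ : ℤ → ℝ := fun n => match n with
    | .ofNat k => ξ1 k
    | .negSucc k => -(ξ2 k) with hξZ
  set ηZ : ℤ → ℝ := fun n => match n with
    | .ofNat k => η1 k
    | .negSucc k => -(η2 k) with hηZ
  -- memberships
  have hmemξ : ∀ n : ℤ, ξZ n ∈ Ioo (W n) (W (n + 1)) := by
    intro n
    cases n with
    | ofNat k =>
        rw [hsuccof k]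
        exact hξmem1 k
    | negSucc k =>
        cases k with
        | zero =>
            rw [hsuccneg0]
            have h1 := hξmem2 0
            rw [hP20] at h1
            show -(ξ2 0) ∈ Ioo (-(P2 1)) (P1 0)
            rw [hP10]
            exact ⟨by linarith [h1.2], by linarith [h1.1]⟩
        | succ m =>
            rw [hsuccneg m]
            have h1 := hξmem2 (m + 1)
            show -(ξ2 (m + 1)) ∈ Ioo (-(P2 (m + 1 + 1))) (-(P2 (m + 1)))
            exact ⟨by linarith [h1.2], by linarith [h1.1]⟩
  have hmemη : ∀ n : ℤ, ηZ n ∈ Ioo (W n) (W (n + 1)) := by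
    intro n
    cases n with
    | ofNat k =>
        rw [hsuccof k]
        exact hηmem1 k
    | negSucc k =>
        cases k with
        | zero =>
            rw [hsuccneg0]
            have h1 := hηmem2 0
            rw [hP20] at h1
            show -(η2 0) ∈ Ioo (-(P2 1)) (P1 0)
            rw [hP10]
            exact ⟨by linarith [h1.2], by linarith [h1.1]⟩
        | succ m =>
            rw [hsuccneg m]
            have h1 := hηmem2 (m + 1)
            show -(η2 (m + 1)) ∈ Ioo (-(P2 (m + 1 + 1))) (-(P2 (m + 1)))
            exact ⟨by linarith [h1.2], by linarith [h1.1]⟩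
  have hWmono : StrictMono W := by
    apply strictMono_int_of_lt_succ
    intro n
    have h1 := hmemξ n
    exact lt_trans h1.1 h1.2
  have hWtop : Tendsto W atTop atTop := by
    apply tendsto_atTop_atTop_of_monotone hWmono.monotone
    intro b
    refine ⟨Int.ofNat ⌈b⌉₊, ?_⟩
    show b ≤ P1 ⌈b⌉₊
    exact le_trans (Nat.le_ceil b) (hP1ge _)
  have hWbot : Tendsto W atBot atBot := by
    apply tendsto_atBot_atBot_of_monotone hWmono.monotone
    intro b
    refine ⟨Int.negSucc ⌈-b⌉₊, ?_⟩
    show -(P2 (⌈-b⌉₊ + 1)) ≤ b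
    have h1 := hP2ge (⌈-b⌉₊ + 1)
    have h2 := Nat.le_ceil (-b)
    push_cast at h1
    linarith
  have hFBS : ∀ n, SMS (FB n) := by
    intro n
    cases n with
    | ofNat k => exact hΓS1 k
    | negSucc k => exact reflF_SMS (hΓS2 k)
  -- node agreement
  have hagree : ∀ n : ℤ, FB n (W (n + 1)) = FB (n + 1) (W (n + 1)) := by
    intro n
    cases n with
    | ofNat k =>
        rw [hsuccof k]
        show Γ1 k (P1 (k + 1)) = Γ1 (k + 1) (P1 (k + 1))
        rw [htr1 k _ (le_refl _), htl1 (k + 1) _ (le_refl _)]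
    | negSucc k =>
        cases k with
        | zero =>
            rw [hsuccneg0]
            show reflF (Γ2 0) (P1 0) = Γ1 0 (P1 0)
            rw [hP10]
            show -(Γ2 0 (-0)) = Γ1 0 0
            rw [neg_zero]
            rw [htl1 0 0 (by rw [hP10])]
            have h2 : Γ2 0 0 = tailF fc (dirn false 0) (par2 0) 0 := htl2 0 0 (by rw [hP20])
            rw [h2, hpar20, hpar10]
            have h3 : dirn false 0 = false := hd2f 0 (by decide)
            have h4 : dirn true 0 = true := hd1t 0 (by decide)
            rw [h3, h4]
            have h5 := reflF_tailF f false 1 0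
            simp only [Bool.not_false] at h5
            have h6 : -tailF fc false 1 0 = reflF (tailF fc false 1) 0 := by
              unfold reflF
              rw [neg_zero]
            rw [h6, hfcdef]
            exact h5
        | succ m =>
            rw [hsuccneg m]
            show reflF (Γ2 (m + 1)) (-(P2 (m + 1))) = reflF (Γ2 m) (-(P2 (m + 1)))
            show -(Γ2 (m + 1) (-(-(P2 (m + 1))))) = -(Γ2 m (-(-(P2 (m + 1)))))
            rw [neg_neg]
            rw [htl2 (m + 1) _ (le_refl _), htr2 m _ (le_refl _)]
  set d : ℤ → ℝ := fun n => FB n (W n) with hd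
  have hdmono : StrictMono d := by
    apply strictMono_int_of_lt_succ
    intro n
    show FB n (W n) < FB (n + 1) (W (n + 1))
    rw [← hagree n]
    exact (hFBS n).1 (hWmono (by omega))
  have hdtop : Tendsto d atTop atTop := by
    apply tendsto_atTop_atTop_of_monotone hdmono.monotone
    intro b
    set k := ⌈b⌉₊ with hk
    refine ⟨Int.ofNat (k + 1), ?_⟩
    have h1 : d (Int.ofNat (k + 1)) = Γ1 k (P1 (k + 1)) := by
      have h0 := hagree (Int.ofNat k)
      rw [hsuccof k] at h0
      show FB (Int.ofNat (k + 1)) (W (Int.ofNat (k + 1))) = Γ1 k (P1 (k + 1))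
      rw [← h0]
    rw [h1]
    have h2 : Γ1 k (ξ1 k) < Γ1 k (P1 (k + 1)) := (hΓS1 k).1 (hξmem1 k).2
    rw [hΓξ1 k] at h2
    have h3 := (hξmem1 k).1
    have h4 := hP1ge k
    have h5 := Nat.le_ceil b
    rw [← hk] at h5
    linarith
  have hdbot : Tendsto d atBot atBot := by
    apply tendsto_atBot_atBot_of_monotone hdmono.monotone
    intro b
    set k := ⌈-b⌉₊ with hk
    refine ⟨Int.negSucc k, ?_⟩
    have h1 : d (Int.negSucc k) = -(Γ2 k (P2 (k + 1))) := by
      show -(Γ2 k (-(-(P2 (k + 1))))) = -(Γ2 k (P2 (k + 1)))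
      rw [neg_neg]
    rw [h1]
    have h2 : Γ2 k (ξ2 k) < Γ2 k (P2 (k + 1)) := (hΓS2 k).1 (hξmem2 k).2
    rw [hΓξ2 k] at h2
    have h3 := (hξmem2 k).1
    have h4 := hP2ge k
    have h5 := Nat.le_ceil (-b)
    rw [← hk] at h5
    linarith
  -- glue
  obtain ⟨G, hGS, hGeval⟩ := glueR W d hWmono hdmono hWtop hWbot hdtop hdbot FB
    (fun n => ((hFBS n).blockIco (W n) (W (n + 1))).1)
    (fun n => by
      have h1 := ((hFBS n).blockIco (W n) (W (n + 1))).2.1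
      rw [hagree n] at h1
      exact h1)
    (fun n => by
      have h1 := ((hFBS n).blockIco (W n) (W (n + 1))).2.2
      rw [hagree n] at h1
      exact h1)
  have hGeval' : ∀ n : ℤ, ∀ x, W n ≤ x → x < W (n + 1) → G x = FB n x :=
    fun n x h1 h2 => hGeval n x ⟨h1, h2⟩
  -- crossing values
  have hGξ : ∀ n, G (ξZ n) = ξZ n := by
    intro n
    have hm := hmemξ n
    rw [hGeval' n _ hm.1.le hm.2]
    cases n with
    | ofNat k => exact hΓξ1 k
    | negSucc k =>
        show -(Γ2 k (-(-(ξ2 k)))) = -(ξ2 k)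
        rw [neg_neg, hΓξ2 k]
  have hGη : ∀ n, G (ηZ n) = f (ηZ n) := by
    intro n
    have hm := hmemη n
    rw [hGeval' n _ hm.1.le hm.2]
    cases n with
    | ofNat k => exact hΓη1 k
    | negSucc k =>
        show -(Γ2 k (-(-(η2 k)))) = f (-(η2 k))
        rw [neg_neg, hΓη2 k]
        have h7 : fc (η2 k) = -f (-(η2 k)) := by
          have h8 := hfcval (-(η2 k))
          rw [neg_neg] at h8
          exact h8
        rw [h7, neg_neg]
  have hξmono : StrictMono ξZ := by
    apply strictMono_int_of_lt_succ
    intro n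
    exact lt_trans (hmemξ n).2 (hmemξ (n + 1)).1
  have hηmono : StrictMono ηZ := by
    apply strictMono_int_of_lt_succ
    intro n
    exact lt_trans (hmemη n).2 (hmemη (n + 1)).1
  have hshift : Tendsto (fun n : ℤ => n + 1) atBot atBot :=
    tendsto_atBot_add_const_right _ 1 tendsto_id
  have hξtop : Tendsto ξZ atTop atTop :=
    tendsto_atTop_mono (fun n => (hmemξ n).1.le) hWtop
  have hξbot : Tendsto ξZ atBot atBot :=
    tendsto_atBot_mono (fun n => (hmemξ n).2.le) (hWbot.comp hshift)
  have hηtop : Tendsto ηZ atTop atTop :=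
    tendsto_atTop_mono (fun n => (hmemη n).1.le) hWtop
  have hηbot : Tendsto ηZ atBot atBot :=
    tendsto_atBot_mono (fun n => (hmemη n).2.le) (hWbot.comp hshift)
  refine ⟨G, ξZ, ηZ, hGS, hξmono, hξtop, hξbot, hηmono, hηtop, hηbot, hGξ, hGη,
    ?_, ?_, ?_, ?_⟩
  · -- Even : G < id on (ξZ n, ξZ (n+1))
    intro n hne x hx
    rcases lt_or_ge x (W (n + 1)) with hxW | hxW
    · have hxb : W n ≤ x := le_of_lt (lt_trans (hmemξ n).1 hx.1)
      rw [hGeval' n x hxb hxW]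
      cases n with
      | ofNat k =>
          have hek : Even k := (hparof k).mp hne
          have h1 := hsb1 k x hx.1
          rw [hd1t k hek] at h1
          simpa using h1
      | negSucc k =>
          have hok : ¬ Even k := (hparneg k).mp hne
          have h2 : -x < ξ2 k := by
            have h3 : -(ξ2 k) < x := hx.1
            linarith
          have h1 := hsa2 k (-x) h2
          rw [hd2t k hok] at h1
          simp only [if_true] at h1
          show -(Γ2 k (-x)) < x
          linarith
    · have hxb2 : x < W (n + 1 + 1) := lt_trans hx.2 (hmemξ (n + 1)).2
      rw [hGeval' (n + 1) x hxW hxb2]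
      cases n with
      | ofNat k =>
          have hek : Even k := (hparof k).mp hne
          have hok1 : ¬ Even (k + 1) := by simp [Nat.even_add_one, hek]
          have hx2 : x < ξ1 (k + 1) := by
            have := hx.2
            rw [hsuccof k] at this
            exact this
          rw [hsuccof k]
          have h1 := hsa1 (k + 1) x hx2
          rw [hd1f (k + 1) hok1] at h1
          show Γ1 (k + 1) x < x
          simpa using h1
      | negSucc k =>
          have hok : ¬ Even k := (hparneg k).mp hne
          cases k with
          | zero => exact absurd Even.zero hok
          | succ m =>
              have hem : Even m := by
                by_contra h
                exact hok (Nat.even_add_one.mpr h)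
              have hx2 : ξ2 m < -x := by
                have := hx.2
                rw [hsuccneg m] at this
                have h3 : x < -(ξ2 m) := this
                linarith
              rw [hsuccneg m]
              have h1 := hsb2 m (-x) hx2
              rw [hd2f m hem] at h1
              simp only [if_neg Bool.false_ne_true] at h1
              show -(Γ2 m (-x)) < x
              linarith
  · -- Odd : id < G on (ξZ n, ξZ (n+1))
    intro n hne x hx
    rcases lt_or_ge x (W (n + 1)) with hxW | hxW
    · have hxb : W n ≤ x := le_of_lt (lt_trans (hmemξ n).1 hx.1)
      rw [hGeval' n x hxb hxW]
      cases n with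
      | ofNat k =>
          have hek : ¬ Even k := fun h => hne ((hparof k).mpr h)
          have h1 := hsb1 k x hx.1
          rw [hd1f k hek] at h1
          simpa using h1
      | negSucc k =>
          have hek : Even k := by
            by_contra h
            exact hne ((hparneg k).mpr h)
          have h2 : -x < ξ2 k := by
            have h3 : -(ξ2 k) < x := hx.1
            linarith
          have h1 := hsa2 k (-x) h2
          rw [hd2f k hek] at h1
          simp only [if_neg Bool.false_ne_true] at h1
          show x < -(Γ2 k (-x))
          linarith
    · have hxb2 : x < W (n + 1 + 1) := lt_trans hx.2 (hmemξ (n + 1)).2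
      rw [hGeval' (n + 1) x hxW hxb2]
      cases n with
      | ofNat k =>
          have hek : ¬ Even k := fun h => hne ((hparof k).mpr h)
          have hek1 : Even (k + 1) := Nat.even_add_one.mpr hek
          have hx2 : x < ξ1 (k + 1) := by
            have := hx.2
            rw [hsuccof k] at this
            exact this
          rw [hsuccof k]
          have h1 := hsa1 (k + 1) x hx2
          rw [hd1t (k + 1) hek1] at h1
          show x < Γ1 (k + 1) x
          simpa using h1
      | negSucc k =>
          have hek : Even k := by
            by_contra h
            exact hne ((hparneg k).mpr h)
          cases k with
          | zero =>
              have hx2 : x < ξ1 0 := by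
                have := hx.2
                rw [hsuccneg0] at this
                exact this
              rw [hsuccneg0]
              have h1 := hsa1 0 x hx2
              rw [hd1t 0 Even.zero] at h1
              simpa using h1
          | succ m =>
              have hom : ¬ Even m := by
                intro h
                rw [Nat.even_add_one] at hek
                exact hek h
              have hx2 : ξ2 m < -x := by
                have := hx.2
                rw [hsuccneg m] at this
                have h3 : x < -(ξ2 m) := this
                linarith
              rw [hsuccneg m]
              have h1 := hsb2 m (-x) hx2
              rw [hd2t m hom] at h1
              simp only [if_true] at h1
              show x < -(Γ2 m (-x))
              linarith
  · -- Even : G < f on (ηZ n, ηZ (n+1))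
    intro n hne x hx
    rcases lt_or_ge x (W (n + 1)) with hxW | hxW
    · have hxb : W n ≤ x := le_of_lt (lt_trans (hmemη n).1 hx.1)
      rw [hGeval' n x hxb hxW]
      cases n with
      | ofNat k =>
          have hek : Even k := (hparof k).mp hne
          have h1 := hsd1 k x hx.1
          rw [hd1t k hek] at h1
          simpa using h1
      | negSucc k =>
          have hok : ¬ Even k := (hparneg k).mp hne
          have h2 : -x < η2 k := by
            have h3 : -(η2 k) < x := hx.1
            linarith
          have h1 := hsc2 k (-x) h2
          rw [hd2t k hok] at h1
          simp only [if_true] at h1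
          rw [hfcval x] at h1
          show -(Γ2 k (-x)) < f x
          linarith
    · have hxb2 : x < W (n + 1 + 1) := lt_trans hx.2 (hmemη (n + 1)).2
      rw [hGeval' (n + 1) x hxW hxb2]
      cases n with
      | ofNat k =>
          have hek : Even k := (hparof k).mp hne
          have hok1 : ¬ Even (k + 1) := by simp [Nat.even_add_one, hek]
          have hx2 : x < η1 (k + 1) := by
            have := hx.2
            rw [hsuccof k] at this
            exact this
          rw [hsuccof k]
          have h1 := hsc1 (k + 1) x hx2
          rw [hd1f (k + 1) hok1] at h1
          show Γ1 (k + 1) x < f x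
          simpa using h1
      | negSucc k =>
          have hok : ¬ Even k := (hparneg k).mp hne
          cases k with
          | zero => exact absurd Even.zero hok
          | succ m =>
              have hem : Even m := by
                by_contra h
                exact hok (Nat.even_add_one.mpr h)
              have hx2 : η2 m < -x := by
                have := hx.2
                rw [hsuccneg m] at this
                have h3 : x < -(η2 m) := this
                linarith
              rw [hsuccneg m]
              have h1 := hsd2 m (-x) hx2
              rw [hd2f m hem] at h1
              simp only [if_neg Bool.false_ne_true] at h1
              rw [hfcval x] at h1
              show -(Γ2 m (-x)) < f x
              linarith
  · -- Odd : f < G on (ηZ n, ηZ (n+1))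
    intro n hne x hx
    rcases lt_or_ge x (W (n + 1)) with hxW | hxW
    · have hxb : W n ≤ x := le_of_lt (lt_trans (hmemη n).1 hx.1)
      rw [hGeval' n x hxb hxW]
      cases n with
      | ofNat k =>
          have hek : ¬ Even k := fun h => hne ((hparof k).mpr h)
          have h1 := hsd1 k x hx.1
          rw [hd1f k hek] at h1
          simpa using h1
      | negSucc k =>
          have hek : Even k := by
            by_contra h
            exact hne ((hparneg k).mpr h)
          have h2 : -x < η2 k := by
            have h3 : -(η2 k) < x := hx.1
            linarith
          have h1 := hsc2 k (-x) h2
          rw [hd2f k hek] at h1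
          simp only [if_neg Bool.false_ne_true] at h1
          rw [hfcval x] at h1
          show f x < -(Γ2 k (-x))
          linarith
    · have hxb2 : x < W (n + 1 + 1) := lt_trans hx.2 (hmemη (n + 1)).2
      rw [hGeval' (n + 1) x hxW hxb2]
      cases n with
      | ofNat k =>
          have hek : ¬ Even k := fun h => hne ((hparof k).mpr h)
          have hek1 : Even (k + 1) := Nat.even_add_one.mpr hek
          have hx2 : x < η1 (k + 1) := by
            have := hx.2
            rw [hsuccof k] at this
            exact this
          rw [hsuccof k]
          have h1 := hsc1 (k + 1) x hx2
          rw [hd1t (k + 1) hek1] at h1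
          show f x < Γ1 (k + 1) x
          simpa using h1
      | negSucc k =>
          have hek : Even k := by
            by_contra h
            exact hne ((hparneg k).mpr h)
          cases k with
          | zero =>
              have hx2 : x < η1 0 := by
                have := hx.2
                rw [hsuccneg0] at this
                exact this
              rw [hsuccneg0]
              have h1 := hsc1 0 x hx2
              rw [hd1t 0 Even.zero] at h1
              simpa using h1
          | succ m =>
              have hom : ¬ Even m := by
                intro h
                rw [Nat.even_add_one] at hek
                exact hek h
              have hx2 : η2 m < -x := by
                have := hx.2
                rw [hsuccneg m] at this
                have h3 : x < -(η2 m) := this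
                linarith
              rw [hsuccneg m]
              have h1 := hsd2 m (-x) hx2
              rw [hd2t m hom] at h1
              simp only [if_true] at h1
              rw [hfcval x] at h1
              show f x < -(Γ2 m (-x))
              linarith

theorem sms_perm_symm_eq {e : Equiv.Perm ℝ} (hS : SMS ⇑e) (x : ℝ) :
    hS.perm.symm x = e.symm x := by
  apply hS.1.injective
  show e (hS.perm.symm x) = e (e.symm x)
  rw [e.apply_symm_apply]
  exact hS.perm_symm_apply_comp x

end

/-- `f` is a homeomorphism of `ℝ`: a bijection of `ℝ` that is continuous in both directions. -/
def IsHomeo (f : Equiv.Perm ℝ) : Prop := Continuous f ∧ Continuous f.symm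

noncomputable section

theorem SMS.isHomeo {e : Equiv.Perm ℝ} (h : SMS ⇑e) : IsHomeo e := by
  constructor
  · exact h.continuous
  · have heq : ⇑e.symm = ⇑h.perm.symm := funext fun x => (sms_perm_symm_eq h x).symm
    rw [heq]
    exact h.symm.continuous

/-- H⁺(ℝ) = R₂(H⁺(ℝ)): every orientation preserving homeomorphism of ℝ is a composite of
two orientation preserving homeomorphisms, each reversible in H⁺(ℝ). -/
theorem stmt_0 (f : Equiv.Perm ℝ) (hf : IsHomeo f) (hfm : StrictMono (⇑f)) :
    ∃ g h : Equiv.Perm ℝ, IsHomeo g ∧ StrictMono (⇑g) ∧ IsHomeo h ∧ StrictMono (⇑h) ∧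
      f = g * h ∧
      (∃ k₁ : Equiv.Perm ℝ, IsHomeo k₁ ∧ StrictMono (⇑k₁) ∧ k₁ * g * k₁⁻¹ = g⁻¹) ∧
      (∃ k₂ : Equiv.Perm ℝ, IsHomeo k₂ ∧ StrictMono (⇑k₂) ∧ k₂ * h * k₂⁻¹ = h⁻¹) := by
  classical
  have hFS : SMS ⇑f := ⟨hfm, f.surjective⟩
  obtain ⟨G, ξ, η, hGS, hξm, hξt, hξb, hηm, hηt, hηb, hGξ, hGη, hS1, hS2, hS3, hS4⟩ :=
    crossing_construction hFS
  set g : Equiv.Perm ℝ := hGS.perm with hgdef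
  have hgS : SMS ⇑g := hGS
  set h : Equiv.Perm ℝ := g⁻¹ * f with hhdef
  have hhval : ∀ x, h x = hGS.perm.symm (f x) := fun x => rfl
  have hhS : SMS ⇑h := ⟨fun a b hab => hGS.symm_strictMono (hfm hab), h.surjective⟩
  have hGg : ∀ x, g x = G x := fun x => rfl
  -- reversal of g
  obtain ⟨k₁, hk₁S, hk₁c⟩ := reversal hGS ξ hξm hξt hξb hGξ hS1 hS2
  -- data for reversal of h
  set c : ℤ → ℝ := fun n => η (n + 1) with hcdef
  have hcm : StrictMono c := fun p q hpq => hηm (by omega)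
  have hct : Tendsto c atTop atTop :=
    hηt.comp (tendsto_atTop_add_const_right _ 1 tendsto_id)
  have hcb : Tendsto c atBot atBot :=
    hηb.comp (tendsto_atBot_add_const_right _ 1 tendsto_id)
  have hhfix : ∀ n, h (c n) = c n := by
    intro n
    rw [hhval]
    have h1 := congrArg hGS.perm.symm (hGη (n + 1))
    rw [hGS.perm_symm_comp_apply] at h1
    exact h1.symm
  have hhlt : ∀ x, f x < G x → h x < x := by
    intro x hx
    have h1 : hGS.perm.symm (f x) < hGS.perm.symm (G x) := hGS.symm_strictMono hx
    rw [hGS.perm_symm_comp_apply] at h1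
    exact h1
  have hhgt : ∀ x, G x < f x → x < h x := by
    intro x hx
    have h1 : hGS.perm.symm (G x) < hGS.perm.symm (f x) := hGS.symm_strictMono hx
    rw [hGS.perm_symm_comp_apply] at h1
    exact h1
  have hhE : ∀ j : ℤ, Even j → ∀ x ∈ Ioo (c j) (c (j + 1)), h x < x := by
    intro j hj x hx
    have hodd : ¬ Even (j + 1) := by
      rw [Int.even_add_one]
      simpa using hj
    have h1 := hS4 (j + 1) hodd x hx
    exact hhlt x h1
  have hhO : ∀ j : ℤ, ¬ Even j → ∀ x ∈ Ioo (c j) (c (j + 1)), x < h x := by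
    intro j hj x hx
    have hev : Even (j + 1) := Int.even_add_one.mpr hj
    have h1 := hS3 (j + 1) hev x hx
    exact hhgt x h1
  obtain ⟨k₂, hk₂S, hk₂c⟩ := reversal hhS c hcm hct hcb hhfix hhE hhO
  refine ⟨g, h, hgS.isHomeo, hgS.1, hhS.isHomeo, hhS.1, by rw [hhdef]; group, ?_, ?_⟩
  · refine ⟨hk₁S.perm, hk₁S.isHomeo, hk₁S.1, ?_⟩
    apply Equiv.ext
    intro x
    show k₁ (G (hk₁S.perm.symm x)) = ⇑g⁻¹ x
    have h1 := hk₁c (hk₁S.perm.symm x)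
    rw [hk₁S.perm_symm_apply_comp x] at h1
    rw [h1]
    show hGS.perm.symm x = g.symm x
    exact sms_perm_symm_eq hgS x
  · refine ⟨hk₂S.perm, hk₂S.isHomeo, hk₂S.1, ?_⟩
    apply Equiv.ext
    intro x
    show k₂ (h (hk₂S.perm.symm x)) = ⇑h⁻¹ x
    have h1 := hk₂c (hk₂S.perm.symm x)
    rw [hk₂S.perm_symm_apply_comp x] at h1
    rw [h1]
    show hhS.perm.symm x = h.symm x
    exact sms_perm_symm_eq hhS x

end
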